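/- arXiv:math/0109103 — 2 statements merged into one kernel-verified Lean document; each statement's English description precedes it below -/
import Mathlib

section
/- Let E be a finite subset of 𝔼, G=(V(E),E), ζ:𝔼→{0,1} any boundary condition, 0<p≤1 and q>0. Then log Z^ζ_{G,p,q} = k_G(ζ¹)·log q + Σ_{e∈E} g^ζ_{G,p,q}(e), where ζ¹ is the configuration obtained from ζ by making every edge in E open. -/
open MeasureTheory Filter Topology ProbabilityTheory

noncomputable section

attribute [local instance] Classical.propDecidable

/-! ### The lattice ℤ³ -/

abbrev V3 := Fin 3 → ℤ
abbrev R3 := Fin 3 → ℝ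

def toR (x : V3) : R3 := fun i => (x i : ℝ)

/-- `L¹` distance on `ℤ³`. -/
def dist1 (x y : V3) : ℤ := ∑ i, |x i - y i|

lemma dist1_comm (x y : V3) : dist1 x y = dist1 y x := by
  simp only [dist1]
  exact Finset.sum_congr rfl fun i _ => abs_sub_comm _ _

abbrev EdgeP := Sym2 V3

def IsLatticeEdge (e : EdgeP) : Prop := ∃ x y : V3, e = s(x, y) ∧ dist1 x y = 1

/-- Configurations: `ω e = true` means that the edge `e` is open. -/
abbrev Config := EdgeP → Bool

/-- `V(E)`: the set of vertices belonging to at least one edge of `E`. -/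
def vertexSet (E : Set EdgeP) : Set V3 := {x | ∃ e ∈ E, x ∈ e}

/-- The graph on `ℤ³` whose edges are the open lattice edges of `ω`. -/
def cfgGraph (ω : Config) : SimpleGraph V3 where
  Adj x y := dist1 x y = 1 ∧ ω s(x, y) = true
  symm := ⟨fun x y h => ⟨by rw [dist1_comm]; exact h.1, by rw [Sym2.eq_swap]; exact h.2⟩⟩
  loopless := ⟨fun x h => by simp [dist1] at h⟩

/-- The number of open components meeting `V(E)`. -/
def kGcount (E : Set EdgeP) (ω : Config) : ℕ :=
  Set.ncard {c : (cfgGraph ω).ConnectedComponent |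
    ∃ x ∈ vertexSet E, (cfgGraph ω).connectedComponentMk x = c}

/-! ### Random-cluster measures -/

def rcWeight (E : Finset EdgeP) (p q : ℝ) (ω : Config) : ℝ :=
  (∏ e ∈ E, if ω e = true then p else 1 - p) * q ^ kGcount (E : Set EdgeP) ω

def extCfg (E : Finset EdgeP) (ζ : Config) (σ : {e // e ∈ E} → Bool) : Config :=
  fun e => if h : e ∈ E then σ ⟨e, h⟩ else ζ e

/-- The partition function `Z^ζ_{G,p,q}`. -/
def Zrc (E : Finset EdgeP) (ζ : Config) (p q : ℝ) : ℝ :=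
  ∑ σ : {e // e ∈ E} → Bool, rcWeight E p q (extCfg E ζ σ)

/-- The random-cluster measure `φ^ζ_{G,p,q}` on configurations. -/
def rcMeasure (E : Finset EdgeP) (ζ : Config) (p q : ℝ) : Measure Config :=
  (ENNReal.ofReal (Zrc E ζ p q))⁻¹ •
    Measure.sum fun σ : {e // e ∈ E} → Bool =>
      ENNReal.ofReal (rcWeight E p q (extCfg E ζ σ)) • Measure.dirac (extCfg E ζ σ)

/-- The all-open (wired) boundary condition. -/
def oneBC : Config := fun _ => true

/-- The function `g^ζ_{G,p,q}(e)`. -/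
def gRC (E : Finset EdgeP) (ζ : Config) (p q : ℝ) (e : EdgeP) : ℝ :=
  ∫ r in p..1, (r - (rcMeasure E ζ r q {ω | ω e = true}).toReal) / (r * (1 - r))

def IsEquatorEdge (e : EdgeP) : Prop :=
  ∃ x y : V3, e = s(x, y) ∧ x 2 = 0 ∧ y 2 = 1 ∧ x 0 = y 0 ∧ x 1 = y 1

/-- The Dobrushin boundary condition `μ`. -/
def dobMu : Config := fun e => if IsEquatorEdge e then false else true

def AgreesOff (E : Set EdgeP) (ζ ω : Config) : Prop := ∀ e ∉ E, ω e = ζ e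


/-! ### Boxes and events -/

/-- The box `Λ_{L,M} = ([-L,L]²×[-M,M]) ∩ ℤ³`. -/
def vbox (L M : ℕ) : Set V3 := {x | |x 0| ≤ (L : ℤ) ∧ |x 1| ≤ (L : ℤ) ∧ |x 2| ≤ (M : ℤ)}

/-- The infinite cylinder `Λ_L = [-L,L]² × ℤ`. -/
def cylV (L : ℕ) : Set V3 := {x | |x 0| ≤ (L : ℤ) ∧ |x 1| ≤ (L : ℤ)}

/-- `E_{L,M}`: edges with at least one endvertex in `Λ_{L,M}`. -/
def edgeBox (L M : ℕ) : Set EdgeP :=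
  {e | IsLatticeEdge e ∧ ∃ x, x ∈ e ∧ x ∈ vbox L M}

/-- `E_L`: edges with at least one endvertex in the cylinder `Λ_L`. -/
def edgeCyl (L : ℕ) : Set EdgeP :=
  {e | IsLatticeEdge e ∧ ∃ x, x ∈ e ∧ x ∈ cylV L}

lemma abs_coord_le_of_dist1 (x y : V3) (h : dist1 x y = 1) (i : Fin 3) :
    |x i - y i| ≤ 1 := by
  have h1 : |x i - y i| ≤ ∑ j, |x j - y j| :=
    Finset.single_le_sum (f := fun j => |x j - y j|) (fun j _ => abs_nonneg _)
      (Finset.mem_univ i)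
  simp only [dist1] at h
  linarith

lemma vbox_finite (L M : ℕ) : (vbox L M).Finite := by
  have h : (Set.univ.pi fun _ : Fin 3 => Set.Icc (-(L + M : ℤ)) (L + M)).Finite :=
    Set.Finite.pi fun _ => Set.finite_Icc _ _
  refine h.subset ?_
  rintro x ⟨h0, h1, h2⟩ i _
  have hi : |x i| ≤ (L + M : ℤ) := by
    fin_cases i
    · refine le_trans h0 ?_; omega
    · refine le_trans h1 ?_; omega
    · refine le_trans h2 ?_; omega
  exact Set.mem_Icc.mpr (abs_le.mp hi)

lemma mem_vbox_succ {L M : ℕ} {x y : V3} (hx : x ∈ vbox L M) (h : dist1 x y = 1) :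
    y ∈ vbox (L + 1) (M + 1) := by
  obtain ⟨h0, h1, h2⟩ := hx
  have k0 := abs_coord_le_of_dist1 x y h 0
  have k1 := abs_coord_le_of_dist1 x y h 1
  have k2 := abs_coord_le_of_dist1 x y h 2
  have e0 : |y 0| - |x 0| ≤ |y 0 - x 0| := abs_sub_abs_le_abs_sub _ _
  have e1 : |y 1| - |x 1| ≤ |y 1 - x 1| := abs_sub_abs_le_abs_sub _ _
  have e2 : |y 2| - |x 2| ≤ |y 2 - x 2| := abs_sub_abs_le_abs_sub _ _
  rw [abs_sub_comm] at e0 e1 e2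
  refine ⟨?_, ?_, ?_⟩ <;> push_cast <;> linarith

lemma vbox_subset_succ (L M : ℕ) : vbox L M ⊆ vbox (L + 1) (M + 1) := by
  rintro x ⟨h0, h1, h2⟩
  refine ⟨?_, ?_, ?_⟩ <;> push_cast <;> linarith

lemma edgeBox_finite (L M : ℕ) : (edgeBox L M).Finite := by
  have h1 : (vbox (L + 1) (M + 1)).Finite := vbox_finite _ _
  have h2 : ((fun p : V3 × V3 => s(p.1, p.2)) ''
      ((vbox (L + 1) (M + 1)) ×ˢ (vbox (L + 1) (M + 1)))).Finite := (h1.prod h1).image _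
  refine h2.subset ?_
  rintro e ⟨⟨x, y, rfl, hd⟩, z, hz, hzbox⟩
  rcases Sym2.mem_iff.mp hz with rfl | rfl
  · exact ⟨(z, y), ⟨vbox_subset_succ _ _ hzbox, mem_vbox_succ hzbox hd⟩, rfl⟩
  · exact ⟨(x, z), ⟨mem_vbox_succ hzbox (by rw [dist1_comm]; exact hd),
      vbox_subset_succ _ _ hzbox⟩, rfl⟩

/-- `E_{L,M}` as a finite set of edges. -/
def edgeBoxF (L M : ℕ) : Finset EdgeP := (edgeBox_finite L M).toFinset

/-- The upper boundary `∂⁺Λ`. -/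
def upBdry (Λ : Set V3) : Set V3 := {x | x ∉ Λ ∧ 0 < x 2 ∧ ∃ z ∈ Λ, dist1 x z = 1}

/-- The lower boundary `∂⁻Λ`. -/
def lowBdry (Λ : Set V3) : Set V3 := {x | x ∉ Λ ∧ x 2 ≤ 0 ∧ ∃ z ∈ Λ, dist1 x z = 1}

/-- The event `I_{L,M}`. -/
def eventI (L M : ℕ) : Set Config :=
  {ω | ¬ ∃ a ∈ upBdry (vbox L M), ∃ b ∈ lowBdry (vbox L M), (cfgGraph ω).Reachable a b}

/-- The event `I_L`. -/
def eventIL (L : ℕ) : Set Config :=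
  {ω | ¬ ∃ a ∈ upBdry (cylV L), ∃ b ∈ lowBdry (cylV L), (cfgGraph ω).Reachable a b}

/-- `Ω^μ_{L,M}`. -/
def OmegaMu (L M : ℕ) : Set Config := {ω | AgreesOff (edgeBox L M) dobMu ω}

/-- `Ω^μ_L`. -/
def OmegaMuL (L : ℕ) : Set Config := {ω | AgreesOff (edgeCyl L) dobMu ω}

/-! ### Translations and similarity of edge sets -/

def trE (t : V3) (e : EdgeP) : EdgeP := Sym2.map (· + t) e

/-- `A ≃ B`: `B` is a translate of `A`. -/
def SimE (A B : Set EdgeP) : Prop := ∃ t : V3, B = trE t '' A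

/-- `e ≃ f`: the edges are parallel (translates of one another). -/
def ParaE (e f : EdgeP) : Prop := ∃ t : V3, trE t e = f

/-- The vertex set `Q_n(e)`. -/
def QnV (n : ℕ) (e : EdgeP) : Set V3 :=
  {z | ∃ x, x ∈ e ∧ ∃ v : V3, (∀ i, |v i| ≤ (n : ℤ)) ∧ z = x + v}

/-- The set of edges of `E` having both endvertices in `S`. -/
def restrictE (E : Set EdgeP) (S : Set V3) : Set EdgeP := {f | f ∈ E ∧ ∀ x ∈ f, x ∈ S}
/-! ### Plaquettes -/

def plqOf (x y : V3) : Set R3 :=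
  {z | ∀ i, (x i = y i → |z i - (x i : ℝ)| ≤ 1 / 2) ∧
            (x i ≠ y i → z i = ((x i : ℝ) + (y i : ℝ)) / 2)}

/-- The plaquette `h(e)` dual to the edge `e`. -/
def dualPlq (e : EdgeP) : Set R3 := {z | ∃ x y : V3, e = s(x, y) ∧ z ∈ plqOf x y}

/-- Membership in `ℍ`, the set of all plaquettes. -/
def IsPlq (P : Set R3) : Prop := ∃ e, IsLatticeEdge e ∧ P = dualPlq e

/-- `0`-connectedness of two (distinct) plaquettes. -/
def ZeroConn (P Q : Set R3) : Prop := P ≠ Q ∧ (P ∩ Q).Nonempty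

/-- `1`-connectedness of two (distinct) plaquettes: the intersection is
homeomorphic to the unit interval. -/
def OneConn (P Q : Set R3) : Prop :=
  P ≠ Q ∧ Nonempty (↥(P ∩ Q) ≃ₜ ↥(Set.Icc (0 : ℝ) 1))

/-- A set `H` of plaquettes is connected under the adjacency relation `r`. -/
def SetConn (r : Set R3 → Set R3 → Prop) (H : Set (Set R3)) : Prop :=
  ∀ P ∈ H, ∀ Q ∈ H, Relation.ReflTransGen (fun a b => a ∈ H ∧ b ∈ H ∧ r a b) P Q

def ez : V3 := fun i => if i = 2 then 1 else 0

/-- The regular interface `δ₀`. -/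
def regI : Set (Set R3) := {P | ∃ x : V3, x 2 = 0 ∧ P = dualPlq s(x, x + ez)}

/-- The plaquettes that are open in `ω` (dual to closed edges). -/
def openPlqs (ω : Config) : Set (Set R3) :=
  {P | ∃ e, IsLatticeEdge e ∧ ω e = false ∧ P = dualPlq e}

/-- `δ₀ \ {h(e) : e ∈ EE}`. -/
def baseI (EE : Set EdgeP) : Set (Set R3) := regI \ {P | ∃ e ∈ EE, P = dualPlq e}

/-- The interface `Δ(ω)`: the maximal `1`-connected set of open plaquettes
containing `δ₀ \ {h(e) : e ∈ EE}`. -/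
def interfaceOf (EE : Set EdgeP) (ω : Config) : Set (Set R3) :=
  {P | P ∈ openPlqs ω ∧ ∃ P₀ ∈ baseI EE,
    Relation.ReflTransGen (fun a b => b ∈ openPlqs ω ∧ OneConn a b) P₀ P}

/-- The set of interfaces `D_{L,M}`. -/
def Dlm (L M : ℕ) : Set (Set (Set R3)) :=
  {δ | ∃ ω, ω ∈ eventI L M ∧ ω ∈ OmegaMu L M ∧ δ = interfaceOf (edgeBox L M) ω}

/-- The set of interfaces `D_L = ∪_{M ≥ 1} D_{L,M}`. -/
def DL (L : ℕ) : Set (Set (Set R3)) := ⋃ M : ℕ, Dlm L (M + 1)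

/-- The extended interface `δ̄`. -/
def extI (δ : Set (Set R3)) : Set (Set R3) :=
  δ ∪ {P | IsPlq P ∧ ∃ Q ∈ δ, OneConn P Q}

/-- A horizontal plaquette (dual to a vertical edge). -/
def IsHoriz (P : Set R3) : Prop := ∃ x : V3, P = dualPlq s(x, x + ez)

/-- The semi-extended interface `δ*`. -/
def semiI (δ : Set (Set R3)) : Set (Set R3) :=
  δ ∪ {P | IsHoriz P ∧ ∃ Q ∈ δ, OneConn P Q}

def projMap (z : R3) : R3 := fun i => if i = 2 then 1 / 2 else z i

/-- The projection `π(h)` of a plaquette onto the regular interface. -/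
def projP (P : Set R3) : Set R3 := projMap '' P

/-- The c-plaquettes of (the semi-extended interface of) `δ`. -/
def cPlqs (δ : Set (Set R3)) : Set (Set R3) :=
  {P | P ∈ semiI δ ∧ IsHoriz P ∧ ∀ Q ∈ semiI δ, projP Q = projP P → Q = P}

/-- The w-plaquettes of `δ`. -/
def wPlqs (δ : Set (Set R3)) : Set (Set R3) := semiI δ \ cPlqs δ

/-- A ceiling: a maximal `0`-connected set of c-plaquettes. -/
def IsCeiling (δ C : Set (Set R3)) : Prop :=
  C.Nonempty ∧ C ⊆ cPlqs δ ∧ SetConn ZeroConn C ∧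
    ∀ C', C ⊆ C' → C' ⊆ cPlqs δ → SetConn ZeroConn C' → C' = C

/-- A wall: a maximal `0`-connected set of w-plaquettes. -/
def IsWall (δ W : Set (Set R3)) : Prop :=
  W.Nonempty ∧ W ⊆ wPlqs δ ∧ SetConn ZeroConn W ∧
    ∀ W', W ⊆ W' → W' ⊆ wPlqs δ → SetConn ZeroConn W' → W' = W

/-- The projection of a wall: projections of its horizontal plaquettes. -/
def projW (W : Set (Set R3)) : Set (Set R3) :=
  {P | ∃ Q ∈ W, IsHoriz Q ∧ P = projP Q}

/-- `|H|`: the number of plaquettes in `H ∩ {h(e) : e ∈ EE}`. -/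
def plqCard (EE : Set EdgeP) (H : Set (Set R3)) : ℕ :=
  Set.ncard {P | P ∈ H ∧ ∃ e ∈ EE, P = dualPlq e}

/-- `E(H)`: the set of (lattice) edges dual to the plaquettes of `H`. -/
def EdgesOf (δ : Set (Set R3)) : Set EdgeP := {e | IsLatticeEdge e ∧ dualPlq e ∈ δ}

/-- The maximal configuration `ω̄_δ` compatible with `δ`. -/
def omax (δ : Set (Set R3)) : Config := fun e => if dualPlq e ∈ δ then false else true

/-- `K_δ`: the number of connected components of `(ℤ³, η(ω̄_δ))`. -/
def Kdelta (δ : Set (Set R3)) : ℕ :=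
  Set.ncard (Set.univ : Set ((cfgGraph (omax δ)).ConnectedComponent))
/-! ### Ceilings, walls, standard walls, groups of walls -/

/-- The `0`-connected component of `h` within the plaquette set `A`. -/
def zeroComp (A : Set (Set R3)) (h : Set R3) : Set (Set R3) :=
  {h' | h' ∈ A ∧ Relation.ReflTransGen (fun a b => a ∈ A ∧ b ∈ A ∧ ZeroConn a b) h h'}

/-- The ceiling `C` has height `s`: its plaquettes lie in the plane `x₃ = s + ½`. -/
def CeilHeight (C : Set (Set R3)) (s : ℤ) : Prop :=
  ∀ P ∈ C, ∀ z ∈ P, z 2 = (s : ℝ) + 1 / 2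

/-- `C` is the base of the wall `W` of `δ`: the ceiling `0`-connected to `W`
whose projection lies in the infinite `0`-connected component of `δ₀ \ π(W)`. -/
def IsBase (δ W C : Set (Set R3)) : Prop :=
  IsCeiling δ C ∧ (∃ P ∈ C, ∃ Q ∈ W, ZeroConn P Q) ∧
    ∀ P ∈ C, (zeroComp (regI \ projW W) (projP P)).Infinite

/-- The altitude of the wall `W` (the height of its base). -/
def Altitude (δ W : Set (Set R3)) (s : ℤ) : Prop := ∃ C, IsBase δ W C ∧ CeilHeight C s

/-- A pair of plaquette sets, as in a (standard) wall `S = (A, B)`. -/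
abbrev WallPair := Set (Set R3) × Set (Set R3)

/-- `δ` witnesses that `(A, B)` is a standard wall: `A ⊆ δ`, `B ⊆ δ* \ δ`,
and `A ∪ B` is the unique wall of `δ`. -/
def StdWallIface (L : ℕ) (A B δ : Set (Set R3)) : Prop :=
  δ ∈ DL L ∧ A ⊆ δ ∧ B ⊆ semiI δ \ δ ∧ IsWall δ (A ∪ B) ∧ ∀ W, IsWall δ W → W = A ∪ B

/-- `(A, B)` is a standard wall. -/
def IsStdWall (L : ℕ) (A B : Set (Set R3)) : Prop := ∃ δ, StdWallIface L A B δ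

/-- An admissible family of standard walls. -/
def AdmFam (L : ℕ) (F : Set WallPair) : Prop :=
  (∀ S ∈ F, IsStdWall L S.1 S.2) ∧
  (∀ S ∈ F, ∀ S' ∈ F, S ≠ S' →
    ∀ h ∈ projW (S.1 ∪ S.2), ∀ h' ∈ projW (S'.1 ∪ S'.2), ¬(h = h' ∨ ZeroConn h h')) ∧
  (∀ S ∈ F, ∀ e : EdgeP, e ∉ edgeCyl L → dualPlq e ∈ S.1 ∪ S.2 →
    (dualPlq e ∈ S.1 ↔ dobMu e = false))

/-- `ρ(h, δ)`: the number of plaquettes of `δ` projecting into `h`. -/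
def rho (h : Set R3) (δ : Set (Set R3)) : ℕ := Set.ncard {P | P ∈ δ ∧ projP P ⊆ h}

/-- The centre of a plaquette. -/
def plqCenter (P : Set R3) : R3 :=
  fun i => (sInf ((fun z => z i) '' P) + sSup ((fun z => z i) '' P)) / 2

/-- The `L^∞` distance `‖h₁, h₂‖` between the centres of two plaquettes. -/
def plqDist (P Q : Set R3) : ℝ := dist (plqCenter P) (plqCenter Q)

/-- Two standard walls are close. -/
def CloseW (L : ℕ) (S T : WallPair) : Prop :=
  ∃ δS δT, StdWallIface L S.1 S.2 δS ∧ StdWallIface L T.1 T.2 δT ∧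
    ∃ h ∈ projW (S.1 ∪ S.2), ∃ h' ∈ projW (T.1 ∪ T.2),
      plqDist h h' < Real.sqrt (rho h δS) + Real.sqrt (rho h' δT)

/-- A group of (standard) walls. -/
def IsGroupW (L : ℕ) (G : Set WallPair) : Prop :=
  AdmFam L G ∧ (∀ S ∈ G, (S.1 ∪ S.2).Nonempty) ∧
    ∀ S ∈ G, ∀ T ∈ G,
      Relation.ReflTransGen (fun a b => a ∈ G ∧ b ∈ G ∧ CloseW L a b) S T

/-- An admissible family of groups of walls. -/
def AdmGFam (L : ℕ) (𝔾 : Set (Set WallPair)) : Prop :=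
  (∀ G ∈ 𝔾, IsGroupW L G) ∧
    ∀ G ∈ 𝔾, ∀ G' ∈ 𝔾, G ≠ G' → ∀ S ∈ G, ∀ T ∈ G', ¬ CloseW L S T

/-- Translation of a plaquette by `t ∈ ℤ³`. -/
def trPlq (t : V3) (P : Set R3) : Set R3 := (fun z => z + toR t) '' P

/-- Translation of a set of plaquettes by `t ∈ ℤ³`. -/
def trSet (t : V3) (H : Set (Set R3)) : Set (Set R3) := trPlq t '' H

/-- The vector `(0, 0, -s)`. -/
def negz (s : ℤ) : V3 := fun i => if i = 2 then -s else 0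

/-- The family of standard walls associated with an interface `δ`:
each wall of `δ` translated to altitude `0`. -/
def famOf (δ : Set (Set R3)) : Set WallPair :=
  {S | ∃ W s, IsWall δ W ∧ Altitude δ W s ∧
      S = (trSet (negz s) (W ∩ δ), trSet (negz s) (W \ δ))}

/-- The family of groups of walls associated with an interface `δ`:
the components of `famOf δ` under closeness. -/
def groupsOf (L : ℕ) (δ : Set (Set R3)) : Set (Set WallPair) :=
  {G | ∃ S₀ ∈ famOf δ, G = {S | S ∈ famOf δ ∧
      Relation.ReflTransGen (fun a b => a ∈ famOf δ ∧ b ∈ famOf δ ∧ CloseW L a b) S₀ S}}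

/-- `h` is the origin of the standard wall `S`, relative to the ordering `ord`
of the plaquettes of `δ₀`. -/
def IsOrigin (ord : Set R3 → ℕ) (S : WallPair) (h : Set R3) : Prop :=
  h ∈ projW (S.1 ∪ S.2) ∧ (∃ h' ∈ regI \ projW (S.1 ∪ S.2), OneConn h h') ∧
    ∀ g ∈ projW (S.1 ∪ S.2), (∃ g' ∈ regI \ projW (S.1 ∪ S.2), OneConn g g') →
      ord h ≤ ord g

/-- `h` is the origin of the group of walls `G`. -/
def IsGOrigin (ord : Set R3 → ℕ) (G : Set WallPair) (h : Set R3) : Prop :=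
  (∃ S ∈ G, IsOrigin ord S h) ∧ ∀ S ∈ G, ∀ g, IsOrigin ord S g → ord h ≤ ord g

/-- `N(S) = |A|`. -/
def NW (S : WallPair) : ℕ := S.1.ncard

/-- `Π(S) = N(S) - |π(S)|`. -/
def PiW (S : WallPair) : ℤ := (NW S : ℤ) - ((projW (S.1 ∪ S.2)).ncard : ℤ)

/-- `Π(G) = Σ_{S ∈ G} Π(S)`. -/
def PiG (G : Set WallPair) : ℤ := ∑ᶠ S ∈ G, PiW S

/-! ### Weak convergence, inside and outside, and displacement -/

/-- Weak convergence of probability measures on the configuration space. -/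
def WeakLim (μs : ℕ → Measure Config) (μ : Measure Config) : Prop :=
  ∀ f : BoundedContinuousFunction Config ℝ,
    Tendsto (fun n => ∫ ω, f ω ∂(μs n)) atTop (𝓝 (∫ ω, f ω ∂μ))

/-- The inside of `T ⊆ ℝ³`. -/
def insR (T : Set R3) : Set R3 :=
  {z | z ∉ T ∧ Bornology.IsBounded (connectedComponentIn Tᶜ z)}

/-- The outside of `T ⊆ ℝ³`. -/
def outR (T : Set R3) : Set R3 :=
  {z | z ∉ T ∧ ¬ Bornology.IsBounded (connectedComponentIn Tᶜ z)}

/-- A splitting set of plaquettes. -/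
def IsSplitting (H : Set (Set R3)) : Prop :=
  H.Finite ∧ (∀ P ∈ H, IsPlq P) ∧ SetConn OneConn H ∧ (insR (⋃₀ H)).Nonempty

/-- `h ↔ ∞`: the plaquette `h ∈ δ₀` is joined to infinity by a `1`-connected
sequence of c-plaquettes of the interface `Δ(ω)` lying in `δ₀`. -/
def HtoInf (L : ℕ) (ω : Config) (h : Set R3) : Prop :=
  ∃ (r : ℕ) (hs : ℕ → Set R3), hs 0 = h ∧ (∀ i < r, OneConn (hs i) (hs (i + 1))) ∧
    (∀ i ≤ r, hs i ∈ regI ∧ hs i ∈ cPlqs (interfaceOf (edgeCyl L) ω)) ∧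
    ∃ e, e ∉ edgeCyl L ∧ hs r = dualPlq e

/-- The displacement `D(x, δ)` of the interface `δ` at `x = (a, b, ½)`. -/
def displ (δ : Set (Set R3)) (a b : ℤ) : ℝ :=
  sSup {r | ∃ d : ℝ, r = |d - 1 / 2| ∧
    (fun i : Fin 3 => if i = 0 then (a : ℝ) else if i = 1 then (b : ℝ) else d) ∈ ⋃₀ δ}
/-! ### Auxiliary material for Statement 2 -/

namespace S2Aux

variable (F : Finset EdgeP) (ζ : Config) (q : ℝ)

/-- Number of clusters of the configuration extending `ζ` by `σ` on `F`. -/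
def kcnt (σ : {e // e ∈ F} → Bool) : ℕ := kGcount (F : Set EdgeP) (extCfg F ζ σ)

/-- The weight of the configuration `σ` at edge-parameter `r`. -/
def wgt (σ : {e // e ∈ F} → Bool) (r : ℝ) : ℝ :=
  (∏ e ∈ F.attach, (if σ e then r else 1 - r)) * q ^ kcnt F ζ σ

/-- The weight with the factor of the edge `e` removed. -/
def Pe (σ : {e // e ∈ F} → Bool) (e : {e // e ∈ F}) (r : ℝ) : ℝ :=
  (∏ f ∈ F.attach.erase e, (if σ f then r else 1 - r)) * q ^ kcnt F ζ σ

def Ae (e : {e // e ∈ F}) (r : ℝ) : ℝ := ∑ σ, if σ e then Pe F ζ q σ e r else 0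

def Be (e : {e // e ∈ F}) (r : ℝ) : ℝ := ∑ σ, if σ e then 0 else Pe F ζ q σ e r

def Se (e : {e // e ∈ F}) (r : ℝ) : ℝ := ∑ σ, if σ e then wgt F ζ q σ r else 0

lemma extCfg_apply (σ : {e // e ∈ F} → Bool) (e : {e // e ∈ F}) :
    extCfg F ζ σ e.val = σ e := by
  simp [extCfg, e.prop]

lemma rcWeight_eq (σ : {e // e ∈ F} → Bool) (r : ℝ) :
    rcWeight F r q (extCfg F ζ σ) = wgt F ζ q σ r := by
  unfold rcWeight wgt kcnt
  congr 1
  rw [← Finset.prod_attach F (fun e => if extCfg F ζ σ e = true then r else 1 - r)]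
  exact Finset.prod_congr rfl fun e _ => by rw [extCfg_apply]

lemma Zrc_eq (r : ℝ) : Zrc F ζ r q = ∑ σ, wgt F ζ q σ r := by
  unfold Zrc
  exact Finset.sum_congr rfl fun σ _ => rcWeight_eq F ζ q σ r

lemma wgt_factor (σ : {e // e ∈ F} → Bool) (e : {e // e ∈ F}) (r : ℝ) :
    wgt F ζ q σ r = (if σ e then r else 1 - r) * Pe F ζ q σ e r := by
  unfold wgt Pe
  rw [← Finset.mul_prod_erase _ _ (Finset.mem_attach F e)]
  ring

lemma Z_split (e : {e // e ∈ F}) (r : ℝ) :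
    Zrc F ζ r q = r * Ae F ζ q e r + (1 - r) * Be F ζ q e r := by
  rw [Zrc_eq, Ae, Be, Finset.mul_sum, Finset.mul_sum, ← Finset.sum_add_distrib]
  refine Finset.sum_congr rfl fun σ _ => ?_
  rw [wgt_factor F ζ q σ e]
  split_ifs <;> ring

lemma Se_eq (e : {e // e ∈ F}) (r : ℝ) :
    Se F ζ q e r = r * Ae F ζ q e r := by
  rw [Se, Ae, Finset.mul_sum]
  refine Finset.sum_congr rfl fun σ _ => ?_
  rw [wgt_factor F ζ q σ e]
  split_ifs <;> ring

variable {q}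

lemma wgt_nonneg (hq : 0 < q) (σ : {e // e ∈ F} → Bool) {r : ℝ}
    (hr0 : 0 ≤ r) (hr1 : r ≤ 1) : 0 ≤ wgt F ζ q σ r := by
  refine mul_nonneg (Finset.prod_nonneg fun e _ => ?_) (pow_pos hq _).le
  split_ifs
  · exact hr0
  · linarith

lemma Pe_nonneg (hq : 0 < q) (σ : {e // e ∈ F} → Bool) (e : {e // e ∈ F}) {r : ℝ}
    (hr0 : 0 ≤ r) (hr1 : r ≤ 1) : 0 ≤ Pe F ζ q σ e r := by
  refine mul_nonneg (Finset.prod_nonneg fun f _ => ?_) (pow_pos hq _).le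
  split_ifs
  · exact hr0
  · linarith

lemma Zrc_pos (hq : 0 < q) {r : ℝ} (hr0 : 0 < r) (hr1 : r ≤ 1) :
    0 < Zrc F ζ r q := by
  rw [Zrc_eq]
  refine Finset.sum_pos' (fun σ _ => wgt_nonneg F ζ hq σ hr0.le hr1) ?_
  refine ⟨fun _ => true, Finset.mem_univ _, ?_⟩
  unfold wgt
  refine mul_pos (Finset.prod_pos fun e _ => ?_) (pow_pos hq _)
  simpa using hr0

lemma Se_nonneg (hq : 0 < q) (e : {e // e ∈ F}) {r : ℝ}
    (hr0 : 0 ≤ r) (hr1 : r ≤ 1) : 0 ≤ Se F ζ q e r := by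
  refine Finset.sum_nonneg fun σ _ => ?_
  split_ifs
  · exact wgt_nonneg F ζ hq σ hr0 hr1
  · exact le_refl 0

/-- The random-cluster probability of `J_e` in terms of weights. -/
lemma rcMeasure_apply (hq : 0 < q) {r : ℝ} (hr0 : 0 < r) (hr1 : r ≤ 1)
    (e : {e // e ∈ F}) :
    (rcMeasure F ζ r q {ω | ω e.val = true}).toReal = Se F ζ q e r / Zrc F ζ r q := by
  have hZ : 0 < Zrc F ζ r q := Zrc_pos F ζ hq hr0 hr1
  have hA : MeasurableSet {ω : Config | ω e.val = true} := by
    have h : {ω : Config | ω e.val = true} = (fun ω : Config => ω e.val) ⁻¹' {true} := rfl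
    rw [h]
    exact measurable_pi_apply e.val (measurableSet_singleton true)
  have hterm : ∀ σ : {e // e ∈ F} → Bool,
      (ENNReal.ofReal (rcWeight F r q (extCfg F ζ σ)) • Measure.dirac (extCfg F ζ σ))
        {ω | ω e.val = true}
      = ENNReal.ofReal (if σ e then wgt F ζ q σ r else 0) := by
    intro σ
    rw [Measure.smul_apply, smul_eq_mul, Measure.dirac_apply' _ hA, Set.indicator_apply]
    have hmem : extCfg F ζ σ ∈ {ω : Config | ω e.val = true} ↔ σ e = true := by
      simp [Set.mem_setOf_eq, extCfg_apply]
    by_cases h : σ e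
    · rw [if_pos (hmem.mpr h), if_pos h, Pi.one_apply, mul_one, rcWeight_eq]
    · rw [if_neg (fun hc => h (hmem.mp hc)), if_neg h, mul_zero, ENNReal.ofReal_zero]
  rw [rcMeasure, Measure.smul_apply, Measure.sum_apply _ hA, tsum_fintype]
  simp only [hterm]
  rw [smul_eq_mul, ← ENNReal.ofReal_sum_of_nonneg (fun σ _ => by
        split_ifs with h
        · exact wgt_nonneg F ζ hq σ hr0.le hr1
        · exact le_refl 0),
    ENNReal.toReal_mul, ENNReal.toReal_inv, ENNReal.toReal_ofReal hZ.le,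
    ENNReal.toReal_ofReal]
  · rw [inv_mul_eq_div]; rfl
  · exact Se_nonneg F ζ hq e hr0.le hr1

variable (q)

lemma hasDerivAt_wgt (σ : {e // e ∈ F} → Bool) (r : ℝ) :
    HasDerivAt (fun r => wgt F ζ q σ r)
      (∑ e ∈ F.attach, (if σ e then 1 else -1) * Pe F ζ q σ e r) r := by
  have h : HasDerivAt (fun r => ∏ e ∈ F.attach, (if σ e then r else 1 - r))
      (∑ e ∈ F.attach, (∏ f ∈ F.attach.erase e, (if σ f then r else 1 - r)) •
        (if σ e then (1 : ℝ) else -1)) r := by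
    refine HasDerivAt.fun_finsetProd fun e _ => ?_
    by_cases h : σ e
    · simpa [h] using hasDerivAt_id' r
    · simpa [h] using (hasDerivAt_id r).const_sub 1
  have h2 := h.mul_const (q ^ kcnt F ζ σ)
  convert h2 using 1
  · rfl
  · rfl
  · rfl
  rw [Finset.sum_mul]
  refine Finset.sum_congr rfl fun e _ => ?_
  unfold Pe
  rw [smul_eq_mul]
  ring

lemma hasDerivAt_Z (r : ℝ) :
    HasDerivAt (fun r => Zrc F ζ r q)
      (∑ e ∈ F.attach, (Ae F ζ q e r - Be F ζ q e r)) r := by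
  have h : HasDerivAt (fun r => ∑ σ : {e // e ∈ F} → Bool, wgt F ζ q σ r)
      (∑ σ : {e // e ∈ F} → Bool,
        ∑ e ∈ F.attach, (if σ e then 1 else -1) * Pe F ζ q σ e r) r :=
    HasDerivAt.fun_sum fun σ _ => hasDerivAt_wgt F ζ q σ r
  have heq : (fun r => ∑ σ : {e // e ∈ F} → Bool, wgt F ζ q σ r)
      = fun r => Zrc F ζ r q := by
    funext r; rw [Zrc_eq]
  rw [heq] at h
  convert h using 1
  rw [Finset.sum_comm]
  refine Finset.sum_congr rfl fun e _ => ?_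
  rw [Ae, Be, ← Finset.sum_sub_distrib]
  refine Finset.sum_congr rfl fun σ _ => ?_
  split_ifs <;> ring

lemma continuous_Pe (σ : {e // e ∈ F} → Bool) (e : {e // e ∈ F}) :
    Continuous fun r => Pe F ζ q σ e r := by
  unfold Pe
  refine Continuous.mul ?_ continuous_const
  refine continuous_finset_prod _ fun f _ => ?_
  by_cases h : σ f <;> simp [h] <;> fun_prop

lemma continuous_Ae (e : {e // e ∈ F}) : Continuous fun r => Ae F ζ q e r := by
  unfold Ae
  refine continuous_finset_sum _ fun σ _ => ?_
  by_cases h : σ e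
  · simpa [h] using continuous_Pe F ζ q σ e
  · simpa [h] using continuous_const

lemma continuous_Be (e : {e // e ∈ F}) : Continuous fun r => Be F ζ q e r := by
  unfold Be
  refine continuous_finset_sum _ fun σ _ => ?_
  by_cases h : σ e
  · simpa [h] using continuous_const
  · simpa [h] using continuous_Pe F ζ q σ e

lemma continuous_Z : Continuous fun r => Zrc F ζ r q := by
  have heq : (fun r => Zrc F ζ r q)
      = fun r => ∑ σ : {e // e ∈ F} → Bool, wgt F ζ q σ r := by
    funext r; rw [Zrc_eq]
  rw [heq]
  refine continuous_finset_sum _ fun σ _ => ?_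
  unfold wgt
  refine Continuous.mul ?_ continuous_const
  refine continuous_finset_prod _ fun f _ => ?_
  by_cases h : σ f <;> simp [h] <;> fun_prop

lemma Zrc_one : Zrc F ζ 1 q = q ^ kcnt F ζ (fun _ => true) := by
  rw [Zrc_eq]
  rw [Finset.sum_eq_single_of_mem (fun _ => true) (Finset.mem_univ _)]
  · unfold wgt; simp
  · intro σ _ hσ
    obtain ⟨e, he⟩ := Function.ne_iff.mp hσ
    have hfe : σ e = false := by simpa using he
    unfold wgt
    rw [Finset.prod_eq_zero (Finset.mem_attach F e), zero_mul]
    simp [hfe]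

end S2Aux

/-- the logarithm of the partition function in terms of edge densities. -/
theorem statement2 (E : Set EdgeP) (hE : E.Finite) (hEdge : ∀ e ∈ E, IsLatticeEdge e)
    (ζ : Config) (p q : ℝ) (hp0 : 0 < p) (hp1 : p ≤ 1) (hq : 0 < q) :
    Real.log (Zrc hE.toFinset ζ p q)
      = (kGcount E (extCfg hE.toFinset ζ fun _ => true) : ℝ) * Real.log q
        + ∑ e ∈ hE.toFinset, gRC hE.toFinset ζ p q e := by
  classical
  set F := hE.toFinset with hF
  have hZpos : ∀ r ∈ Set.Icc p 1, 0 < Zrc F ζ r q := fun r hr =>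
    S2Aux.Zrc_pos F ζ hq (lt_of_lt_of_le hp0 hr.1) hr.2
  have huIcc : Set.uIcc p 1 = Set.Icc p 1 := Set.uIcc_of_le hp1
  have hderiv : ∀ r ∈ Set.uIcc p 1,
      HasDerivAt (fun r => Real.log (Zrc F ζ r q))
        ((∑ e ∈ F.attach, (S2Aux.Ae F ζ q e r - S2Aux.Be F ζ q e r)) / Zrc F ζ r q) r := by
    intro r hr
    rw [huIcc] at hr
    exact (S2Aux.hasDerivAt_Z F ζ q r).log (hZpos r hr).ne'
  have hcontZ := S2Aux.continuous_Z F ζ q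
  have hZne : ∀ r ∈ Set.uIcc p 1, Zrc F ζ r q ≠ 0 := by
    intro r hr; rw [huIcc] at hr; exact (hZpos r hr).ne'
  have hint : IntervalIntegrable
      (fun r => (∑ e ∈ F.attach, (S2Aux.Ae F ζ q e r - S2Aux.Be F ζ q e r)) / Zrc F ζ r q)
      MeasureTheory.volume p 1 := by
    refine (ContinuousOn.div ?_ hcontZ.continuousOn hZne).intervalIntegrable
    exact (continuous_finset_sum _ fun e _ =>
      (S2Aux.continuous_Ae F ζ q e).sub (S2Aux.continuous_Be F ζ q e)).continuousOn
  have hFTC := intervalIntegral.integral_eq_sub_of_hasDerivAt hderiv hint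
  have hIeach : ∀ e : {e // e ∈ F}, IntervalIntegrable
      (fun r => (S2Aux.Be F ζ q e r - S2Aux.Ae F ζ q e r) / Zrc F ζ r q)
      MeasureTheory.volume p 1 := by
    intro e
    refine (ContinuousOn.div ?_ hcontZ.continuousOn hZne).intervalIntegrable
    exact ((S2Aux.continuous_Be F ζ q e).sub (S2Aux.continuous_Ae F ζ q e)).continuousOn
  have hg : ∀ e : {e // e ∈ F}, gRC F ζ p q e.val
      = ∫ r in p..1, (S2Aux.Be F ζ q e r - S2Aux.Ae F ζ q e r) / Zrc F ζ r q := by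
    intro e
    rw [gRC]
    refine intervalIntegral.integral_congr_ae ?_
    have h1 : ∀ᵐ r : ℝ ∂MeasureTheory.volume, r ≠ (1 : ℝ) := by
      rw [MeasureTheory.ae_iff]
      simp only [not_not, Set.setOf_eq_eq_singleton]
      exact Real.volume_singleton
    filter_upwards [h1] with r hr hmem
    rw [Set.uIoc_of_le hp1] at hmem
    have hr0 : 0 < r := lt_trans hp0 hmem.1
    have hrlt : r < 1 := lt_of_le_of_ne hmem.2 hr
    have hZ' : 0 < Zrc F ζ r q := hZpos r ⟨hmem.1.le, hmem.2⟩
    have hden : r * S2Aux.Ae F ζ q e r + (1 - r) * S2Aux.Be F ζ q e r ≠ 0 := by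
      rw [← S2Aux.Z_split]; exact hZ'.ne'
    have h1r : (1 : ℝ) - r ≠ 0 := sub_ne_zero_of_ne (Ne.symm hr)
    rw [S2Aux.rcMeasure_apply F ζ hq hr0 hmem.2 e, S2Aux.Se_eq, S2Aux.Z_split F ζ q e r]
    field_simp
    ring
  have hsum : ∑ e ∈ F, gRC F ζ p q e
      = ∫ r in p..1, ∑ e ∈ F.attach,
          (S2Aux.Be F ζ q e r - S2Aux.Ae F ζ q e r) / Zrc F ζ r q := by
    rw [← Finset.sum_attach F (fun e => gRC F ζ p q e)]
    rw [Finset.sum_congr rfl (fun e _ => hg e)]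
    exact (intervalIntegral.integral_finset_sum fun e _ => hIeach e).symm
  have hpt : ∀ r : ℝ, (∑ e ∈ F.attach,
        (S2Aux.Be F ζ q e r - S2Aux.Ae F ζ q e r) / Zrc F ζ r q)
      = -((∑ e ∈ F.attach, (S2Aux.Ae F ζ q e r - S2Aux.Be F ζ q e r)) / Zrc F ζ r q) := by
    intro r
    rw [← Finset.sum_div, ← neg_div]
    congr 1
    rw [← Finset.sum_neg_distrib]
    exact Finset.sum_congr rfl fun e _ => by ring
  have hsum2 : ∑ e ∈ F, gRC F ζ p q e
      = Real.log (Zrc F ζ p q) - Real.log (Zrc F ζ 1 q) := by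
    rw [hsum]
    simp_rw [hpt]
    rw [intervalIntegral.integral_neg, hFTC]
    ring
  have hZ1 : Real.log (Zrc F ζ 1 q)
      = (S2Aux.kcnt F ζ (fun _ => true) : ℝ) * Real.log q := by
    rw [S2Aux.Zrc_one, Real.log_pow]
  have hk : S2Aux.kcnt F ζ (fun _ => true) = kGcount E (extCfg F ζ fun _ => true) := by
    rw [S2Aux.kcnt, hE.coe_toFinset]
  rw [← hk]
  linarith [hsum2, hZ1]

end
end

section
/- For all L,M≥1, the event I_{L,M}∩Ω^μ_{L,M} is exactly the set of all configurations ω∈Ω^μ_{L,M} for which there exists δ∈D_{L,M} such that ω(e)=0 whenever h(e)∈δ. -/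
open MeasureTheory Filter Topology ProbabilityTheory

noncomputable section

attribute [local instance] Classical.propDecidable

namespace Stmt4

/-! #### Basic vector operations -/

def mv (i : Fin 3) (d : ℤ) (x : V3) : V3 := fun j => if j = i then x j + d else x j

def upd (i : Fin 3) (t : ℤ) (x : V3) : V3 := fun j => if j = i then t else x j

lemma mv_same (i : Fin 3) (d : ℤ) (x : V3) : mv i d x i = x i + d := if_pos rfl
lemma mv_ne {i j : Fin 3} (h : j ≠ i) (d : ℤ) (x : V3) : mv i d x j = x j := if_neg h
lemma upd_same (i : Fin 3) (t : ℤ) (x : V3) : upd i t x i = t := if_pos rfl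
lemma upd_ne {i j : Fin 3} (h : j ≠ i) (t : ℤ) (x : V3) : upd i t x j = x j := if_neg h

lemma upd_self (i : Fin 3) (x : V3) : upd i (x i) x = x := by
  funext j; by_cases h : j = i <;> simp [upd, h]

lemma mv_comm {i l : Fin 3} (h : i ≠ l) (d e : ℤ) (x : V3) :
    mv l e (mv i d x) = mv i d (mv l e x) := by
  funext j
  by_cases h1 : j = l <;> by_cases h2 : j = i <;>
    simp_all [mv]

lemma mv_cancel (i : Fin 3) (d : ℤ) (x : V3) : mv i (-d) (mv i d x) = x := by
  funext j; by_cases h : j = i <;> simp [mv, h]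

lemma mv_upd_comm {i l : Fin 3} (h : l ≠ i) (d t : ℤ) (x : V3) :
    mv l d (upd i t x) = upd i t (mv l d x) := by
  funext j
  by_cases h1 : j = l <;> by_cases h2 : j = i <;> simp_all [mv, upd]

lemma dist1_mv (i : Fin 3) (d : ℤ) (x : V3) : dist1 x (mv i d x) = |d| := by
  have h : ∀ j, |x j - mv i d x j| = if j = i then |d| else 0 := by
    intro j
    by_cases h : j = i
    · subst h
      rw [mv_same, if_pos rfl]
      have : x j - (x j + d) = -d := by ring
      rw [this, abs_neg]
    · rw [mv_ne h, if_neg h]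
      simp
  simp only [dist1]
  rw [Finset.sum_congr rfl (fun j _ => h j), Finset.sum_ite_eq' Finset.univ i (fun _ => |d|)]
  simp

lemma dist1_mv' (i : Fin 3) (d : ℤ) (hd : d = 1 ∨ d = -1) (x : V3) :
    dist1 x (mv i d x) = 1 := by
  rw [dist1_mv]; rcases hd with rfl | rfl <;> norm_num

lemma lattice_mv (i : Fin 3) (d : ℤ) (hd : d = 1 ∨ d = -1) (x : V3) :
    IsLatticeEdge s(x, mv i d x) := ⟨x, mv i d x, rfl, dist1_mv' i d hd x⟩

lemma latticeStep {x y : V3} (h : dist1 x y = 1) :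
    ∃ i σ, (σ = 1 ∨ σ = -1) ∧ y = mv i σ x := by
  rw [dist1, Fin.sum_univ_three, Int.abs_eq_natAbs, Int.abs_eq_natAbs,
    Int.abs_eq_natAbs] at h
  have hc : ((x 0 - y 0 = 1 ∨ x 0 - y 0 = -1) ∧ x 1 = y 1 ∧ x 2 = y 2) ∨
      (x 0 = y 0 ∧ (x 1 - y 1 = 1 ∨ x 1 - y 1 = -1) ∧ x 2 = y 2) ∨
      (x 0 = y 0 ∧ x 1 = y 1 ∧ (x 2 - y 2 = 1 ∨ x 2 - y 2 = -1)) := by omega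
  rcases hc with ⟨h1, h2, h3⟩ | ⟨h1, h2, h3⟩ | ⟨h1, h2, h3⟩
  · exact ⟨0, y 0 - x 0, by omega, by funext j; fin_cases j <;> simp [mv] <;> omega⟩
  · exact ⟨1, y 1 - x 1, by omega, by funext j; fin_cases j <;> simp [mv] <;> omega⟩
  · exact ⟨2, y 2 - x 2, by omega, by funext j; fin_cases j <;> simp [mv] <;> omega⟩

/-! #### Description of dual plaquettes -/

lemma plq_desc (x : V3) (i : Fin 3) (σ : ℤ) (hσ : σ = 1 ∨ σ = -1) :
    dualPlq s(x, mv i σ x) =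
      {z : R3 | z i = (x i : ℝ) + σ / 2 ∧ ∀ j, j ≠ i → |z j - (x j : ℝ)| ≤ 1 / 2} := by
  have hσ0 : σ ≠ 0 := by rcases hσ with rfl | rfl <;> norm_num
  ext z
  simp only [dualPlq, Set.mem_setOf_eq]
  constructor
  · rintro ⟨p, q, hpq, hz⟩
    rw [Sym2.eq_iff] at hpq
    have key : ∀ p q : V3, x = p ∧ mv i σ x = q ∨ x = q ∧ mv i σ x = p →
        z ∈ plqOf p q → z i = (x i : ℝ) + σ / 2 ∧ ∀ j, j ≠ i → |z j - (x j : ℝ)| ≤ 1 / 2 := by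
      rintro p q (⟨rfl, rfl⟩ | ⟨rfl, rfl⟩) hz
      · constructor
        · have := (hz i).2 (by rw [mv_same]; omega)
          rw [this, mv_same]; push_cast; ring
        · intro j hj
          have := (hz j).1 (by rw [mv_ne hj])
          exact this
      · constructor
        · have := (hz i).2 (by rw [mv_same]; omega)
          rw [this, mv_same]; push_cast; ring
        · intro j hj
          have h0 := (hz j).1 (by rw [mv_ne hj])
          rw [mv_ne hj] at h0; exact h0
    exact key p q hpq hz
  · rintro ⟨h1, h2⟩
    refine ⟨x, mv i σ x, rfl, fun j => ⟨?_, ?_⟩⟩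
    · intro hj
      have hji : j ≠ i := by
        intro h; subst h; rw [mv_same] at hj; omega
      exact h2 j hji
    · intro hj
      have hji : j = i := by
        by_contra h; rw [mv_ne h] at hj; exact hj rfl
      subst hji
      rw [mv_same, h1]; push_cast; ring

/-! #### Injectivity of dual plaquettes on lattice edges -/

lemma half_center (x : V3) (i : Fin 3) (σ : ℤ) (hσ : σ = 1 ∨ σ = -1) :
    (fun j => if j = i then (x i : ℝ) + σ / 2 else (x j : ℝ)) ∈
      dualPlq s(x, mv i σ x) := by
  rw [plq_desc x i σ hσ]
  refine ⟨by simp, fun j hj => by simp [hj]⟩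

lemma dualPlq_inj_mv {x x' : V3} {i i' : Fin 3} {σ σ' : ℤ}
    (hσ : σ = 1 ∨ σ = -1) (hσ' : σ' = 1 ∨ σ' = -1)
    (h : dualPlq s(x, mv i σ x) = dualPlq s(x', mv i' σ' x')) :
    s(x, mv i σ x) = s(x', mv i' σ' x') := by
  have hc := half_center x i σ hσ
  rw [h, plq_desc x' i' σ' hσ'] at hc
  obtain ⟨hc1, hc2⟩ := hc
  dsimp only at hc1 hc2
  -- first, i = i'
  have hii : i = i' := by
    by_contra hne
    rw [if_neg (Ne.symm hne)] at hc1
    have h2r : (2 * x i' : ℝ) = 2 * x' i' + σ' := by rw [hc1]; ring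
    have h2z : (2 * x i' : ℤ) = 2 * x' i' + σ' := by exact_mod_cast h2r
    omega
  subst hii
  rw [if_pos rfl] at hc1
  have hkey : 2 * x i + σ = 2 * x' i + σ' := by
    have hr : ((2 * x i + σ : ℤ) : ℝ) = ((2 * x' i + σ' : ℤ) : ℝ) := by
      push_cast; linarith
    exact_mod_cast hr
  have hoff : ∀ j, j ≠ i → x j = x' j := by
    intro j hj
    have hb := hc2 j hj
    simp only [if_neg hj] at hb
    by_contra hne
    have h1 : (1:ℤ) ≤ |x j - x' j| := by
      rw [Int.abs_eq_natAbs]; omega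
    have h1r : (1:ℝ) ≤ |(x j : ℝ) - x' j| := by exact_mod_cast h1
    linarith
  rcases hσ with rfl | rfl <;> rcases hσ' with rfl | rfl
  · -- σ = σ' = 1
    have hx : x = x' := by
      funext j; by_cases hj : j = i
      · subst hj; omega
      · exact hoff j hj
    rw [hx]
  · -- σ = 1, σ' = -1 : x' = mv i 1 x
    have hx' : x' = mv i 1 x := by
      funext j; by_cases hj : j = i
      · subst hj; rw [mv_same]; omega
      · rw [mv_ne hj]; exact (hoff j hj).symm
    rw [hx', mv_cancel i 1 x]
    exact Sym2.eq_swap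
  · -- σ = -1, σ' = 1
    have hx' : x' = mv i (-1) x := by
      funext j; by_cases hj : j = i
      · subst hj; rw [mv_same]; omega
      · rw [mv_ne hj]; exact (hoff j hj).symm
    have hx3 : mv i 1 (mv i (-1) x) = x := by
      funext j; by_cases hj : j = i <;> simp [mv, hj]
    rw [hx', hx3]
    exact Sym2.eq_swap
  · have hx : x = x' := by
      funext j; by_cases hj : j = i
      · subst hj; omega
      · exact hoff j hj
    rw [hx]

lemma dualPlq_inj {e f : EdgeP} (he : IsLatticeEdge e) (hf : IsLatticeEdge f)
    (h : dualPlq e = dualPlq f) : e = f := by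
  obtain ⟨x, y, rfl, hxy⟩ := he
  obtain ⟨x', y', rfl, hxy'⟩ := hf
  obtain ⟨i, σ, hσ, rfl⟩ := latticeStep hxy
  obtain ⟨i', σ', hσ', rfl⟩ := latticeStep hxy'
  exact dualPlq_inj_mv hσ hσ' h

end Stmt4

namespace Stmt4

/-! #### Segments and homeomorphisms -/

def SegSet (i l m : Fin 3) (A B C : ℝ) : Set R3 :=
  {z | z i = A ∧ z l = B ∧ |z m - C| ≤ 1 / 2}

lemma segHomeo {i l m : Fin 3} (hil : i ≠ l) (him : i ≠ m) (hlm : l ≠ m)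
    (hcov : ∀ j : Fin 3, j = i ∨ j = l ∨ j = m) (A B C : ℝ) :
    Nonempty (↥(SegSet i l m A B C) ≃ₜ ↥(Set.Icc (0 : ℝ) 1)) := by
  refine ⟨Homeomorph.mk ⟨?_, ?_, ?_, ?_⟩ ?_ ?_⟩
  · -- toFun
    exact fun z => ⟨z.1 m - C + 1/2, by
      obtain ⟨-, -, h3⟩ := z.2
      rw [abs_le] at h3
      exact ⟨by linarith [h3.1], by linarith [h3.2]⟩⟩
  · -- invFun
    exact fun t => ⟨fun j => if j = i then A else if j = l then B else C - 1/2 + t.1, by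
      refine ⟨by simp, ?_, ?_⟩
      · show (if l = i then A else if l = l then B else _) = B
        rw [if_neg (Ne.symm hil), if_pos rfl]
      · show |(if m = i then A else if m = l then B else C - 1/2 + t.1) - C| ≤ 1/2
        rw [if_neg (Ne.symm him), if_neg (Ne.symm hlm)]
        obtain ⟨h0, h1⟩ := t.2
        rw [abs_le]
        constructor <;> [linarith; linarith]⟩
  · -- left inverse
    rintro ⟨z, hz⟩
    obtain ⟨h1, h2, h3⟩ := hz
    ext j
    dsimp only
    by_cases hji : j = i
    · subst hji; rw [if_pos rfl, h1]
    · rw [if_neg hji]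
      by_cases hjl : j = l
      · subst hjl; rw [if_pos rfl, h2]
      · rw [if_neg hjl]
        rcases hcov j with rfl | rfl | rfl
        · exact absurd rfl hji
        · exact absurd rfl hjl
        · ring
  · -- right inverse
    rintro ⟨t, ht⟩
    ext
    dsimp only
    rw [if_neg (Ne.symm him), if_neg (Ne.symm hlm)]
    ring
  · -- continuity toFun
    exact Continuous.subtype_mk
      ((((continuous_apply m).comp continuous_subtype_val).sub continuous_const).add
        continuous_const) _
  · -- continuity invFun
    refine Continuous.subtype_mk (continuous_pi fun j => ?_) _
    by_cases hji : j = i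
    · simp only [if_pos hji]; exact continuous_const
    · simp only [if_neg hji]
      by_cases hjl : j = l
      · simp only [if_pos hjl]; exact continuous_const
      · simp only [if_neg hjl]
        exact continuous_const.add continuous_subtype_val

lemma pair_of_forall_ne {i l m : Fin 3} (hil : i ≠ l) (him : i ≠ m)
    (hcov : ∀ j : Fin 3, j = i ∨ j = l ∨ j = m) (Pr : Fin 3 → Prop) :
    (∀ j, j ≠ i → Pr j) ↔ Pr l ∧ Pr m := by
  constructor
  · exact fun h => ⟨h l (Ne.symm hil), h m (Ne.symm him)⟩
  · rintro ⟨h1, h2⟩ j hj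
    rcases hcov j with rfl | rfl | rfl
    · exact absurd rfl hj
    · exact h1
    · exact h2

/-! #### Intersections of plaquettes around a unit square -/

lemma interP1 {i l m : Fin 3} (hil : i ≠ l) (him : i ≠ m) (hlm : l ≠ m)
    (hcov : ∀ j : Fin 3, j = i ∨ j = l ∨ j = m)
    {σ τ : ℤ} (hσ : σ = 1 ∨ σ = -1) (hτ : τ = 1 ∨ τ = -1) (x : V3) :
    dualPlq s(x, mv i σ x) ∩ dualPlq s(x, mv l τ x) =
      SegSet i l m ((x i : ℝ) + σ/2) ((x l : ℝ) + τ/2) (x m : ℝ) := by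
  rw [plq_desc x i σ hσ, plq_desc x l τ hτ]
  ext z
  simp only [Set.mem_inter_iff, Set.mem_setOf_eq, SegSet]
  rw [pair_of_forall_ne hil him hcov, pair_of_forall_ne (Ne.symm hil) hlm
    (fun j => by rcases hcov j with h | h | h <;> tauto)]
  rcases hσ with rfl | rfl <;> rcases hτ with rfl | rfl <;>
    push_cast <;>
    simp only [abs_le] <;>
    constructor
  all_goals
    first
    | (rintro ⟨⟨h1, _, h3⟩, h4, _, _⟩; exact ⟨h1, h4, h3⟩)
    | (rintro ⟨h1, h2, h3⟩;
       exact ⟨⟨h1, by constructor <;> linarith, h3⟩, h2, by constructor <;> linarith, h3⟩)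

lemma interP2 {i l m : Fin 3} (hil : i ≠ l) (him : i ≠ m) (hlm : l ≠ m)
    (hcov : ∀ j : Fin 3, j = i ∨ j = l ∨ j = m)
    {σ τ : ℤ} (hσ : σ = 1 ∨ σ = -1) (hτ : τ = 1 ∨ τ = -1) (x : V3) :
    dualPlq s(x, mv i σ x) ∩ dualPlq s(mv i σ x, mv l τ (mv i σ x)) =
      SegSet i l m ((x i : ℝ) + σ/2) ((x l : ℝ) + τ/2) (x m : ℝ) := by
  rw [plq_desc x i σ hσ, plq_desc (mv i σ x) l τ hτ]
  ext z
  simp only [Set.mem_inter_iff, Set.mem_setOf_eq, SegSet]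
  rw [pair_of_forall_ne hil him hcov, pair_of_forall_ne (Ne.symm hil) hlm
    (fun j => by rcases hcov j with h | h | h <;> tauto)]
  simp only [mv_same, mv_ne (Ne.symm hil), mv_ne (Ne.symm him)]
  rcases hσ with rfl | rfl <;> rcases hτ with rfl | rfl <;>
    push_cast <;>
    simp only [abs_le] <;>
    constructor
  all_goals
    first
    | (rintro ⟨⟨h1, _, h3⟩, h4, _, _⟩; exact ⟨h1, h4, h3⟩)
    | (rintro ⟨h1, h2, h3⟩;
       exact ⟨⟨h1, by constructor <;> linarith, h3⟩, h2, by constructor <;> linarith, h3⟩)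

lemma interP3 {i l m : Fin 3} (hil : i ≠ l) (him : i ≠ m) (hlm : l ≠ m)
    (hcov : ∀ j : Fin 3, j = i ∨ j = l ∨ j = m)
    {σ τ : ℤ} (hσ : σ = 1 ∨ σ = -1) (hτ : τ = 1 ∨ τ = -1) (x : V3) :
    dualPlq s(x, mv i σ x) ∩ dualPlq s(mv l τ x, mv i σ (mv l τ x)) =
      SegSet i l m ((x i : ℝ) + σ/2) ((x l : ℝ) + τ/2) (x m : ℝ) := by
  rw [plq_desc x i σ hσ, plq_desc (mv l τ x) i σ hσ]
  ext z
  simp only [Set.mem_inter_iff, Set.mem_setOf_eq, SegSet]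
  rw [pair_of_forall_ne hil him hcov, pair_of_forall_ne hil him hcov]
  simp only [mv_same, mv_ne (Ne.symm hlm), mv_ne hil]
  rcases hσ with rfl | rfl <;> rcases hτ with rfl | rfl <;>
    push_cast <;>
    simp only [abs_le] <;>
    constructor
  all_goals
    first
    | (rintro ⟨⟨h1, h2, h3⟩, h4, h5, h6⟩; exact ⟨h1, by linarith [h2.1, h2.2, h5.1, h5.2], h3⟩)
    | (rintro ⟨h1, h2, h3⟩;
       exact ⟨⟨h1, by constructor <;> linarith, h3⟩, h1, by constructor <;> linarith, h3⟩)

end Stmt4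

namespace Stmt4

lemma oneConn_symm {P Q : Set R3} (h : OneConn P Q) : OneConn Q P := by
  obtain ⟨hne, ⟨e⟩⟩ := h
  exact ⟨hne.symm, ⟨(Homeomorph.setCongr (Set.inter_comm Q P)).trans e⟩⟩

lemma oneConn_of_seg {e f : EdgeP} (he : IsLatticeEdge e) (hf : IsLatticeEdge f)
    (hne : e ≠ f) {i l m : Fin 3} (hil : i ≠ l) (him : i ≠ m) (hlm : l ≠ m)
    (hcov : ∀ j : Fin 3, j = i ∨ j = l ∨ j = m) {A B C : ℝ}
    (hseg : dualPlq e ∩ dualPlq f = SegSet i l m A B C) :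
    OneConn (dualPlq e) (dualPlq f) := by
  refine ⟨fun h => hne (dualPlq_inj he hf h), ?_⟩
  obtain ⟨h⟩ := segHomeo hil him hlm hcov A B C
  exact ⟨(Homeomorph.setCongr hseg).trans h⟩

lemma neP1 {i l : Fin 3} (hil : i ≠ l) {σ τ : ℤ} (hσ : σ = 1 ∨ σ = -1)
    (hτ : τ = 1 ∨ τ = -1) (x : V3) : s(x, mv i σ x) ≠ s(x, mv l τ x) := by
  intro h
  rw [Sym2.eq_iff] at h
  rcases h with ⟨h1, h2⟩ | ⟨h1, h2⟩
  · have := congrFun h2 i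
    rw [mv_same, mv_ne hil] at this
    omega
  · have := congrFun h1 l
    rw [mv_same] at this
    omega

lemma neP2 {i l : Fin 3} (hil : i ≠ l) {σ τ : ℤ} (hσ : σ = 1 ∨ σ = -1)
    (hτ : τ = 1 ∨ τ = -1) (x : V3) :
    s(x, mv i σ x) ≠ s(mv i σ x, mv l τ (mv i σ x)) := by
  intro h
  rw [Sym2.eq_iff] at h
  rcases h with ⟨h1, h2⟩ | ⟨h1, h2⟩
  · have := congrFun h1 i
    rw [mv_same] at this
    omega
  · have := congrFun h1 i
    rw [mv_ne hil, mv_same] at this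
    omega

lemma neP3 {i l : Fin 3} (hil : i ≠ l) {σ τ : ℤ} (hσ : σ = 1 ∨ σ = -1)
    (hτ : τ = 1 ∨ τ = -1) (x : V3) :
    s(x, mv i σ x) ≠ s(mv l τ x, mv i σ (mv l τ x)) := by
  intro h
  rw [Sym2.eq_iff] at h
  rcases h with ⟨h1, h2⟩ | ⟨h1, h2⟩
  · have := congrFun h1 l
    rw [mv_same] at this
    omega
  · have := congrFun h2 l
    rw [mv_ne (Ne.symm hil), mv_same] at this
    omega

/-- All six pairs of distinct edges of a unit square have `1`-connected duals. -/
lemma squareOneConn {i l m : Fin 3} (hil : i ≠ l) (him : i ≠ m) (hlm : l ≠ m)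
    (hcov : ∀ j : Fin 3, j = i ∨ j = l ∨ j = m)
    {σ τ : ℤ} (hσ : σ = 1 ∨ σ = -1) (hτ : τ = 1 ∨ τ = -1) (x : V3) :
    OneConn (dualPlq s(x, mv i σ x)) (dualPlq s(mv i σ x, mv l τ (mv i σ x))) ∧
    OneConn (dualPlq s(x, mv i σ x)) (dualPlq s(mv l τ x, mv l τ (mv i σ x))) ∧
    OneConn (dualPlq s(x, mv i σ x)) (dualPlq s(x, mv l τ x)) ∧
    OneConn (dualPlq s(mv i σ x, mv l τ (mv i σ x))) (dualPlq s(mv l τ x, mv l τ (mv i σ x))) ∧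
    OneConn (dualPlq s(mv i σ x, mv l τ (mv i σ x))) (dualPlq s(x, mv l τ x)) ∧
    OneConn (dualPlq s(mv l τ x, mv l τ (mv i σ x))) (dualPlq s(x, mv l τ x)) := by
  have hcomm : mv l τ (mv i σ x) = mv i σ (mv l τ x) := mv_comm hil σ τ x
  have hcov' : ∀ j : Fin 3, j = l ∨ j = i ∨ j = m := by
    intro j; rcases hcov j with h | h | h <;> tauto
  refine ⟨?_, ?_, ?_, ?_, ?_, ?_⟩
  · exact oneConn_of_seg (lattice_mv i σ hσ x)
      (lattice_mv l τ hτ (mv i σ x)) (neP2 hil hσ hτ x) hil him hlm hcov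
      (interP2 hil him hlm hcov hσ hτ x)
  · rw [hcomm]
    exact oneConn_of_seg (lattice_mv i σ hσ x)
      (lattice_mv i σ hσ (mv l τ x)) (neP3 hil hσ hτ x) hil him hlm hcov
      (interP3 hil him hlm hcov hσ hτ x)
  · exact oneConn_of_seg (lattice_mv i σ hσ x)
      (lattice_mv l τ hτ x) (neP1 hil hσ hτ x) hil him hlm hcov
      (interP1 hil him hlm hcov hσ hτ x)
  · -- E2, E3 : from the corner w
    have hw1 : mv l (-τ) (mv l τ (mv i σ x)) = mv i σ x := mv_cancel l τ (mv i σ x)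
    have hw2 : mv i (-σ) (mv l τ (mv i σ x)) = mv l τ x := by
      rw [hcomm]; rw [mv_cancel i σ (mv l τ x)]
    have hσ' : -σ = 1 ∨ -σ = -1 := by omega
    have hτ' : -τ = 1 ∨ -τ = -1 := by omega
    have h := oneConn_of_seg (e := s(mv l τ (mv i σ x), mv i (-σ) (mv l τ (mv i σ x))))
      (f := s(mv l τ (mv i σ x), mv l (-τ) (mv l τ (mv i σ x))))
      (lattice_mv i (-σ) hσ' _) (lattice_mv l (-τ) hτ' _)
      (neP1 hil hσ' hτ' _) hil him hlm hcov
      (interP1 hil him hlm hcov hσ' hτ' (mv l τ (mv i σ x)))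
    rw [hw1, hw2] at h
    rw [Sym2.eq_swap (a := mv l τ (mv i σ x)) (b := mv l τ x)] at h
    rw [Sym2.eq_swap (a := mv l τ (mv i σ x)) (b := mv i σ x)] at h
    exact oneConn_symm h
  · -- E2, E4
    have h := oneConn_of_seg (e := s(x, mv l τ x))
      (f := s(mv i σ x, mv l τ (mv i σ x)))
      (lattice_mv l τ hτ x) (lattice_mv l τ hτ (mv i σ x))
      (neP3 (Ne.symm hil) hτ hσ x)
      (Ne.symm hil) hlm him hcov'
      (interP3 (Ne.symm hil) hlm him hcov' hτ hσ x)
    exact oneConn_symm h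
  · -- E3, E4
    have h := oneConn_of_seg (e := s(x, mv l τ x))
      (f := s(mv l τ x, mv i σ (mv l τ x)))
      (lattice_mv l τ hτ x) (lattice_mv i σ hσ (mv l τ x))
      (neP2 (Ne.symm hil) hτ hσ x) (Ne.symm hil) hlm him hcov'
      (interP2 (Ne.symm hil) hlm him hcov' hτ hσ x)
    rw [← hcomm] at h
    exact oneConn_symm h

end Stmt4

namespace Stmt4

lemma z2 (a : ZMod 2) : a + a = 0 := CharTwo.add_self_eq_zero a

lemma zmod2_cases (a : ZMod 2) : a = 0 ∨ a = 1 := by revert a; decide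

lemma mv_zero (i : Fin 3) (x : V3) : mv i 0 x = x := by
  funext j; by_cases h : j = i <;> simp [mv, h]

lemma mv_cast (i : Fin 3) (x : V3) {d d' : ℤ} (h : d = d') : mv i d x = mv i d' x := by rw [h]

lemma pt_succ (i : Fin 3) (σ : ℤ) (x : V3) (n : ℕ) :
    mv i (σ * (n + 1 : ℕ)) x = mv i σ (mv i (σ * n) x) := by
  funext j
  by_cases h : j = i
  · subst h; simp only [mv, if_pos rfl]; push_cast; ring
  · simp only [mv, if_neg h]

lemma mv_plain (i : Fin 3) (x : V3) (t : ℤ) (h : x i ≤ t) :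
    mv i (t - x i) x = upd i t x := by
  funext j
  by_cases hj : j = i
  · subst hj; simp only [mv, upd, if_true, eq_self_iff_true]; omega
  · simp only [mv, upd, if_neg hj]

lemma mv_plain' (i : Fin 3) (x : V3) (t : ℤ) (h : t ≤ x i) :
    mv i (-(x i - t)) x = upd i t x := by
  funext j
  by_cases hj : j = i
  · subst hj; simp only [mv, upd, if_true, eq_self_iff_true]; omega
  · simp only [mv, upd, if_neg hj]

lemma upd_mv (i : Fin 3) (t σ : ℤ) (x : V3) :
    upd i (t + σ) x = mv i σ (upd i t x) := by
  funext j
  by_cases hj : j = i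
  · subst hj; simp only [mv, upd, if_true, eq_self_iff_true]
  · simp only [mv, upd, if_neg hj]

lemma quadZ (b1 b2 b3 b4 i1 i2 i3 i4 : ZMod 2)
    (h : b1 + b2 + b3 + b4 = 0)
    (h12 : b1 = 1 → b2 = 1 → i1 = i2) (h13 : b1 = 1 → b3 = 1 → i1 = i3)
    (h14 : b1 = 1 → b4 = 1 → i1 = i4) (h23 : b2 = 1 → b3 = 1 → i2 = i3)
    (h24 : b2 = 1 → b4 = 1 → i2 = i4) (h34 : b3 = 1 → b4 = 1 → i3 = i4) :
    b1 * i1 + b2 * i2 + b3 * i3 + b4 * i4 = 0 := by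
  rcases zmod2_cases b1 with rfl | rfl <;> rcases zmod2_cases b2 with rfl | rfl <;>
    rcases zmod2_cases b3 with rfl | rfl <;> rcases zmod2_cases b4 with rfl | rfl <;>
    simp only [zero_mul, one_mul, add_zero, zero_add] at h ⊢ <;>
    first
      | rfl
      | exact absurd h one_ne_zero
      | (simp only [CharTwo.add_self_eq_zero, zero_add, add_zero] at h;
         exact absurd h one_ne_zero)
      | (rw [h12 rfl rfl]; simp only [CharTwo.add_self_eq_zero]; done)
      | (rw [h13 rfl rfl]; simp only [CharTwo.add_self_eq_zero]; done)
      | (rw [h14 rfl rfl]; simp only [CharTwo.add_self_eq_zero]; done)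
      | (rw [h23 rfl rfl]; simp only [CharTwo.add_self_eq_zero]; done)
      | (rw [h24 rfl rfl]; simp only [CharTwo.add_self_eq_zero]; done)
      | (rw [h34 rfl rfl]; simp only [CharTwo.add_self_eq_zero]; done)
      | (rw [h12 rfl rfl, h34 rfl rfl];
         simp only [CharTwo.add_self_eq_zero, zero_add, add_zero]; done)

/-- Context for the mod-2 crossing cocycle. -/
structure CtxT where
  T : Set V3
  O : Set V3
  Ecls : EdgeP → Prop
  disj : ∀ x, x ∈ T → x ∉ O
  closure : ∀ p q : V3, dist1 p q = 1 → q ∈ O → p ∉ O → p ∈ T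
  swap : ∀ a b : EdgeP,
    (∃ u v, a = s(u, v) ∧ dist1 u v = 1 ∧ (u ∈ T ∧ v ∈ O ∨ v ∈ T ∧ u ∈ O)) →
    (∃ u v, b = s(u, v) ∧ dist1 u v = 1 ∧ (u ∈ T ∧ v ∈ O ∨ v ∈ T ∧ u ∈ O)) →
    OneConn (dualPlq a) (dualPlq b) → (Ecls a ↔ Ecls b)

namespace CtxT

variable (C : CtxT)

def crossP (e : EdgeP) : Prop :=
  ∃ u v, e = s(u, v) ∧ dist1 u v = 1 ∧ (u ∈ C.T ∧ v ∈ C.O ∨ v ∈ C.T ∧ u ∈ C.O)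

def beta (x : V3) : ZMod 2 := if x ∈ C.O then 1 else 0

def ind (e : EdgeP) : ZMod 2 := if C.Ecls e then 1 else 0

def c (x y : V3) : ZMod 2 := (C.beta x + C.beta y) * C.ind s(x, y)

lemma c_symm (x y : V3) : C.c x y = C.c y x := by
  simp only [c]
  rw [add_comm (C.beta x), Sym2.eq_swap]

lemma crossP_of_beta {x y : V3} (hd : dist1 x y = 1)
    (hb : C.beta x + C.beta y = 1) : C.crossP s(x, y) := by
  simp only [beta] at hb
  by_cases hx : x ∈ C.O <;> by_cases hy : y ∈ C.O
  · rw [if_pos hx, if_pos hy, z2 1] at hb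
    exact absurd hb zero_ne_one
  · exact ⟨x, y, rfl, hd, Or.inr ⟨C.closure y x (by rw [dist1_comm]; exact hd) hx hy, hx⟩⟩
  · exact ⟨x, y, rfl, hd, Or.inl ⟨C.closure x y hd hy hx, hy⟩⟩
  · rw [if_neg hx, if_neg hy, add_zero] at hb
    exact absurd hb zero_ne_one

lemma ind_congr {a b : EdgeP} (h : C.Ecls a ↔ C.Ecls b) : C.ind a = C.ind b := by
  simp only [ind]
  by_cases ha : C.Ecls a
  · rw [if_pos ha, if_pos (h.mp ha)]
  · rw [if_neg ha, if_neg (fun hb => ha (h.mpr hb))]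

/-- The square relation for the crossing cocycle. -/
lemma sq {i l m : Fin 3} (hil : i ≠ l) (him : i ≠ m) (hlm : l ≠ m)
    (hcov : ∀ j : Fin 3, j = i ∨ j = l ∨ j = m)
    {σ τ : ℤ} (hσ : σ = 1 ∨ σ = -1) (hτ : τ = 1 ∨ τ = -1) (x : V3) :
    C.c x (mv i σ x) + C.c (mv i σ x) (mv l τ (mv i σ x)) +
      C.c (mv l τ x) (mv l τ (mv i σ x)) + C.c x (mv l τ x) = 0 := by
  obtain ⟨oc12, oc13, oc14, oc23, oc24, oc34⟩ := squareOneConn hil him hlm hcov hσ hτ x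
  have hd1 : dist1 x (mv i σ x) = 1 := dist1_mv' i σ hσ x
  have hd2 : dist1 (mv i σ x) (mv l τ (mv i σ x)) = 1 := dist1_mv' l τ hτ _
  have hd3 : dist1 (mv l τ x) (mv l τ (mv i σ x)) = 1 := by
    rw [mv_comm hil σ τ x]
    exact dist1_mv' i σ hσ _
  have hd4 : dist1 x (mv l τ x) = 1 := dist1_mv' l τ hτ x
  simp only [c]
  apply quadZ
  · have key : ∀ a b c d : ZMod 2, (a + b) + (b + c) + (d + c) + (a + d) = 0 := by decide
    exact key (C.beta x) (C.beta (mv i σ x)) (C.beta (mv l τ (mv i σ x))) (C.beta (mv l τ x))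
  all_goals intro hb1 hb2
  · exact C.ind_congr (C.swap _ _ (C.crossP_of_beta hd1 hb1) (C.crossP_of_beta hd2 hb2) oc12)
  · exact C.ind_congr (C.swap _ _ (C.crossP_of_beta hd1 hb1) (C.crossP_of_beta hd3 hb2) oc13)
  · exact C.ind_congr (C.swap _ _ (C.crossP_of_beta hd1 hb1) (C.crossP_of_beta hd4 hb2) oc14)
  · exact C.ind_congr (C.swap _ _ (C.crossP_of_beta hd2 hb1) (C.crossP_of_beta hd3 hb2) oc23)
  · exact C.ind_congr (C.swap _ _ (C.crossP_of_beta hd2 hb1) (C.crossP_of_beta hd4 hb2) oc24)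
  · exact C.ind_congr (C.swap _ _ (C.crossP_of_beta hd3 hb1) (C.crossP_of_beta hd4 hb2) oc34)

/-! #### One-dimensional sums and the ladder lemma -/

def S (i : Fin 3) (σ : ℤ) (x : V3) : ℕ → ZMod 2
  | 0 => 0
  | (n + 1) => S i σ x n + C.c (mv i (σ * n) x) (mv i (σ * (n + 1 : ℕ)) x)

lemma S_zero (i : Fin 3) (σ : ℤ) (x : V3) : C.S i σ x 0 = 0 := rfl

lemma S_succ (i : Fin 3) (σ : ℤ) (x : V3) (n : ℕ) :
    C.S i σ x (n + 1) = C.S i σ x n + C.c (mv i (σ * n) x) (mv i (σ * (n + 1 : ℕ)) x) := rfl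

lemma Sladder {i l m : Fin 3} (hil : i ≠ l) (him : i ≠ m) (hlm : l ≠ m)
    (hcov : ∀ j : Fin 3, j = i ∨ j = l ∨ j = m)
    {σ τ : ℤ} (hσ : σ = 1 ∨ σ = -1) (hτ : τ = 1 ∨ τ = -1) (x : V3) (n : ℕ) :
    C.S i σ (mv l τ x) n = C.S i σ x n + C.c x (mv l τ x) +
      C.c (mv i (σ * n) x) (mv l τ (mv i (σ * n) x)) := by
  induction n with
  | zero =>
    rw [C.S_zero, C.S_zero, mv_cast i x (show σ * ((0:ℕ):ℤ) = 0 by norm_num), mv_zero]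
    linear_combination -(z2 (C.c x (mv l τ x)))
  | succ n ih =>
    have hp' : mv i (σ * n) (mv l τ x) = mv l τ (mv i (σ * n) x) := (mv_comm hil (σ * n) τ x).symm
    have hq : mv i (σ * (n + 1 : ℕ)) x = mv i σ (mv i (σ * n) x) := pt_succ i σ x n
    have hq' : mv i (σ * (n + 1 : ℕ)) (mv l τ x) = mv l τ (mv i σ (mv i (σ * n) x)) := by
      rw [pt_succ i σ (mv l τ x) n, hp', mv_comm hil σ τ (mv i (σ * n) x)]
    rw [C.S_succ i σ (mv l τ x) n, C.S_succ i σ x n, ih, hp', hq, hq']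
    have hsq := C.sq hil him hlm hcov hσ hτ (mv i (σ * n) x)
    linear_combination hsq - z2 (C.c (mv i (σ * n) x) (mv i σ (mv i (σ * n) x))) -
      z2 (C.c (mv i σ (mv i (σ * n) x)) (mv l τ (mv i σ (mv i (σ * n) x))))

/-! #### Coordinate legs -/

def M (i : Fin 3) (x : V3) (t : ℤ) : ZMod 2 :=
  if x i ≤ t then C.S i 1 x (t - x i).toNat else C.S i (-1) x (x i - t).toNat

lemma mv_upd_pos (i : Fin 3) (x : V3) (t : ℤ) (h : x i ≤ t) :
    mv i (1 * (((t - x i).toNat : ℕ) : ℤ)) x = upd i t x := by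
  rw [mv_cast i x (show (1 * (((t - x i).toNat : ℕ) : ℤ)) = t - x i by omega)]
  exact mv_plain i x t h

lemma mv_upd_neg (i : Fin 3) (x : V3) (t : ℤ) (h : t ≤ x i) :
    mv i ((-1) * (((x i - t).toNat : ℕ) : ℤ)) x = upd i t x := by
  rw [mv_cast i x (show ((-1) * (((x i - t).toNat : ℕ) : ℤ)) = -(x i - t) by omega)]
  exact mv_plain' i x t h

lemma legStep (i : Fin 3) (x : V3) (t : ℤ) {σ : ℤ} (hσ : σ = 1 ∨ σ = -1) :
    C.M i x (t + σ) = C.M i x t + C.c (upd i t x) (upd i (t + σ) x) := by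
  rcases hσ with rfl | rfl
  · by_cases h : x i ≤ t
    · have h1 : x i ≤ t + 1 := by omega
      simp only [M]
      rw [if_pos h, if_pos h1,
        show (t + 1 - x i).toNat = (t - x i).toNat + 1 by omega,
        C.S_succ i 1 x (t - x i).toNat, mv_upd_pos i x t h,
        mv_cast i x (show ((1 : ℤ) * (((t - x i).toNat + 1 : ℕ) : ℤ)) =
          1 * (((t + 1 - x i).toNat : ℕ) : ℤ) by omega),
        mv_upd_pos i x (t + 1) h1]
    · by_cases h2 : x i ≤ t + 1
      · have hxi : x i = t + 1 := by omega
        simp only [M]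
        rw [if_pos h2, if_neg h, show (t + 1 - x i).toNat = 0 by omega,
          show (x i - t).toNat = 0 + 1 by omega,
          C.S_zero i 1 x, C.S_succ i (-1) x 0, C.S_zero i (-1) x, zero_add,
          mv_cast i x (show ((-1 : ℤ) * ((0:ℕ):ℤ)) = 0 by norm_num), mv_zero,
          mv_cast i x (show ((-1 : ℤ) * (((0:ℕ) + 1 : ℕ):ℤ)) = -(x i - t) by omega),
          mv_plain' i x t (by omega),
          show upd i (t + 1) x = x by rw [← hxi]; exact upd_self i x,
          C.c_symm x (upd i t x)]
        linear_combination -(z2 (C.c (upd i t x) x))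
      · have h3 : ¬ x i ≤ t := by omega
        simp only [M]
        rw [if_neg h3, if_neg (by omega : ¬ x i ≤ t + 1),
          show (x i - t).toNat = (x i - (t + 1)).toNat + 1 by omega,
          C.S_succ i (-1) x (x i - (t+1)).toNat,
          mv_cast i x (show ((-1 : ℤ) * (((x i - (t+1)).toNat : ℕ) : ℤ)) =
            -(x i - (t+1)) by omega),
          mv_plain' i x (t+1) (by omega),
          mv_cast i x (show ((-1 : ℤ) * (((x i - (t+1)).toNat + 1 : ℕ) : ℤ)) =
            -(x i - t) by omega),
          mv_plain' i x t (by omega),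
          C.c_symm (upd i (t+1) x) (upd i t x)]
        linear_combination -(z2 (C.c (upd i t x) (upd i (t + 1) x)))
  · by_cases h : x i ≤ t + -1
    · have h1 : x i ≤ t := by omega
      simp only [M]
      rw [if_pos h, if_pos h1, show (t - x i).toNat = (t + -1 - x i).toNat + 1 by omega,
        C.S_succ i 1 x (t + -1 - x i).toNat,
        mv_upd_pos i x (t + -1) h,
        mv_cast i x (show ((1 : ℤ) * (((t + -1 - x i).toNat + 1 : ℕ) : ℤ)) =
          1 * (((t - x i).toNat : ℕ) : ℤ) by omega),
        mv_upd_pos i x t h1,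
        C.c_symm (upd i (t + -1) x) (upd i t x)]
      linear_combination -(z2 (C.c (upd i t x) (upd i (t + -1) x)))
    · by_cases h2 : x i ≤ t
      · have hxi : x i = t := by omega
        simp only [M]
        rw [if_neg (by omega : ¬ x i ≤ t + -1), if_pos h2,
          show (t - x i).toNat = 0 by omega, show (x i - (t + -1)).toNat = 0 + 1 by omega,
          C.S_zero i 1 x, C.S_succ i (-1) x 0, C.S_zero i (-1) x, zero_add,
          mv_cast i x (show ((-1 : ℤ) * ((0:ℕ):ℤ)) = 0 by norm_num), mv_zero,
          mv_cast i x (show ((-1 : ℤ) * (((0:ℕ) + 1 : ℕ):ℤ)) = -(x i - (t + -1)) by omega),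
          mv_plain' i x (t + -1) (by omega),
          show upd i t x = x by rw [← hxi]; exact upd_self i x]
        exact (zero_add _).symm
      · have h3 : ¬ x i ≤ t := by omega
        simp only [M]
        rw [if_neg h3, if_neg (by omega : ¬ x i ≤ t + -1),
          show (x i - (t + -1)).toNat = (x i - t).toNat + 1 by omega,
          C.S_succ i (-1) x (x i - t).toNat,
          mv_cast i x (show ((-1 : ℤ) * (((x i - t).toNat : ℕ) : ℤ)) = -(x i - t) by omega),
          mv_plain' i x t (by omega),
          mv_cast i x (show ((-1 : ℤ) * (((x i - t).toNat + 1 : ℕ) : ℤ)) =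
            -(x i - (t + -1)) by omega),
          mv_plain' i x (t + -1) (by omega)]

end CtxT
end Stmt4

namespace Stmt4

def base0 : V3 := fun _ => 0

lemma xdecomp (x : V3) : upd 2 (x 2) (upd 1 (x 1) (upd 0 (x 0) base0)) = x := by
  funext j; fin_cases j <;> simp [upd, base0]

namespace CtxT

variable (C : CtxT)

lemma Mladder {i l m : Fin 3} (hil : i ≠ l) (him : i ≠ m) (hlm : l ≠ m)
    (hcov : ∀ j : Fin 3, j = i ∨ j = l ∨ j = m)
    {τ : ℤ} (hτ : τ = 1 ∨ τ = -1) (x : V3) (t : ℤ) :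
    C.M i (mv l τ x) t = C.M i x t + C.c x (mv l τ x) +
      C.c (upd i t x) (mv l τ (upd i t x)) := by
  have hbi : (mv l τ x) i = x i := mv_ne hil τ x
  simp only [M, hbi]
  by_cases h : x i ≤ t
  · rw [if_pos h, if_pos h,
      C.Sladder hil him hlm hcov (Or.inl rfl) hτ x (t - x i).toNat,
      mv_upd_pos i x t h]
  · rw [if_neg h, if_neg h,
      C.Sladder hil him hlm hcov (Or.inr rfl) hτ x (x i - t).toNat,
      mv_upd_neg i x t (by omega)]

def g (x : V3) : ZMod 2 :=
  C.M 0 base0 (x 0) + C.M 1 (upd 0 (x 0) base0) (x 1) +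
    C.M 2 (upd 1 (x 1) (upd 0 (x 0) base0)) (x 2)

lemma compat_mv {σ : ℤ} (hσ : σ = 1 ∨ σ = -1) (x : V3) (i : Fin 3) :
    C.g (mv i σ x) = C.g x + C.c x (mv i σ x) := by
  rcases (show i = 0 ∨ i = 1 ∨ i = 2 by revert i; decide) with rfl | rfl | rfl
  · -- i = 0
    have e0 : mv 0 σ x 0 = x 0 + σ := mv_same 0 σ x
    have e1 : mv 0 σ x 1 = x 1 := mv_ne (by decide) σ x
    have e2 : mv 0 σ x 2 = x 2 := mv_ne (by decide) σ x
    simp only [g, e0, e1, e2]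
    rw [C.legStep 0 base0 (x 0) hσ, upd_mv 0 (x 0) σ base0,
      (mv_upd_comm (show (0:Fin 3) ≠ 1 by decide) σ (x 1) (upd 0 (x 0) base0)).symm,
      C.Mladder (show (1:Fin 3) ≠ 0 by decide) (show (1:Fin 3) ≠ 2 by decide)
        (show (0:Fin 3) ≠ 2 by decide) (by decide) hσ (upd 0 (x 0) base0) (x 1),
      C.Mladder (show (2:Fin 3) ≠ 0 by decide) (show (2:Fin 3) ≠ 1 by decide)
        (show (0:Fin 3) ≠ 1 by decide) (by decide) hσ
        (upd 1 (x 1) (upd 0 (x 0) base0)) (x 2),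
      xdecomp x]
    linear_combination
      z2 (C.c (upd 0 (x 0) base0) (mv 0 σ (upd 0 (x 0) base0))) +
      z2 (C.c (upd 1 (x 1) (upd 0 (x 0) base0)) (mv 0 σ (upd 1 (x 1) (upd 0 (x 0) base0))))
  · -- i = 1
    have e0 : mv 1 σ x 0 = x 0 := mv_ne (by decide) σ x
    have e1 : mv 1 σ x 1 = x 1 + σ := mv_same 1 σ x
    have e2 : mv 1 σ x 2 = x 2 := mv_ne (by decide) σ x
    simp only [g, e0, e1, e2]
    rw [C.legStep 1 (upd 0 (x 0) base0) (x 1) hσ,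
      upd_mv 1 (x 1) σ (upd 0 (x 0) base0),
      C.Mladder (show (2:Fin 3) ≠ 1 by decide) (show (2:Fin 3) ≠ 0 by decide)
        (show (1:Fin 3) ≠ 0 by decide) (by decide) hσ
        (upd 1 (x 1) (upd 0 (x 0) base0)) (x 2),
      xdecomp x]
    linear_combination
      z2 (C.c (upd 1 (x 1) (upd 0 (x 0) base0)) (mv 1 σ (upd 1 (x 1) (upd 0 (x 0) base0))))
  · -- i = 2
    have e0 : mv 2 σ x 0 = x 0 := mv_ne (by decide) σ x
    have e1 : mv 2 σ x 1 = x 1 := mv_ne (by decide) σ x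
    have e2 : mv 2 σ x 2 = x 2 + σ := mv_same 2 σ x
    simp only [g, e0, e1, e2]
    rw [C.legStep 2 (upd 1 (x 1) (upd 0 (x 0) base0)) (x 2) hσ,
      upd_mv 2 (x 2) σ (upd 1 (x 1) (upd 0 (x 0) base0)),
      xdecomp x]
    ring

lemma compat {x y : V3} (h : dist1 x y = 1) : C.g y = C.g x + C.c x y := by
  obtain ⟨i, σ, hσ, rfl⟩ := latticeStep h
  exact C.compat_mv hσ x i

lemma g_const {R : V3 → V3 → Prop}
    (hR : ∀ p q, R p q → dist1 p q = 1 ∧ (p ∈ C.O ↔ q ∈ C.O))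
    {a b : V3} (h : Relation.ReflTransGen R a b) : C.g b = C.g a := by
  induction h with
  | refl => rfl
  | @tail b' c' hab hbc ih =>
    have hd := hR _ _ hbc
    have hc0 : C.c b' c' = 0 := by
      simp only [c, beta]
      have hbeq : (if b' ∈ C.O then (1:ZMod 2) else 0) = (if c' ∈ C.O then 1 else 0) := by
        by_cases hb : b' ∈ C.O
        · rw [if_pos hb, if_pos (hd.2.mp hb)]
        · rw [if_neg hb, if_neg (fun hc => hb (hd.2.mpr hc))]
      rw [hbeq, CharTwo.add_self_eq_zero, zero_mul]
    rw [C.compat hd.1, hc0, add_zero, ih]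

/-- The main crossing lemma: every `(T,O)`-crossing edge is in the class of
the reference crossing edge. -/
lemma main {u v p q : V3}
    (hT : Relation.ReflTransGen (fun a b => dist1 a b = 1 ∧ a ∉ C.O ∧ b ∉ C.O) u p)
    (hO : Relation.ReflTransGen (fun a b => dist1 a b = 1 ∧ a ∈ C.O ∧ b ∈ C.O) v q)
    (hpq : dist1 p q = 1) (hpO : p ∉ C.O) (hqO : q ∈ C.O)
    (hbase : C.Ecls s(p, q))
    (huv : dist1 u v = 1) (huO : u ∉ C.O) (hvO : v ∈ C.O) :
    C.Ecls s(u, v) := by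
  have h1 : C.g v = C.g u + C.c u v := C.compat huv
  have h2 : C.g p = C.g u := C.g_const (fun a b hab => ⟨hab.1, iff_of_false hab.2.1 hab.2.2⟩) hT
  have h3 : C.g q = C.g v := C.g_const (fun a b hab => ⟨hab.1, iff_of_true hab.2.1 hab.2.2⟩) hO
  have h4 : C.g q = C.g p + C.c p q := C.compat hpq
  have hcpq : C.c p q = 1 := by
    simp only [c, beta, ind]
    rw [if_neg hpO, if_pos hqO, if_pos hbase, zero_add, one_mul]
  have key : C.g u + C.c u v = C.g u + 1 := by
    rw [← h1, ← h3, h4, hcpq, h2]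
  have hcuv : C.c u v = 1 := add_left_cancel key
  simp only [c, beta, ind] at hcuv
  rw [if_neg huO, if_pos hvO, zero_add, one_mul] at hcuv
  by_cases hE : C.Ecls s(u, v)
  · exact hE
  · rw [if_neg hE] at hcuv
    exact absurd hcuv zero_ne_one

end CtxT
end Stmt4

namespace Stmt4

lemma mv_mv (i : Fin 3) (a b : ℤ) (x : V3) : mv i b (mv i a x) = mv i (a + b) x := by
  funext j
  by_cases h : j = i
  · subst h; simp only [mv, if_true, eq_self_iff_true]; ring
  · simp only [mv, if_neg h]

lemma rtg_move (R : V3 → V3 → Prop) (i : Fin 3) (x : V3) (t : ℤ)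
    (hstep : ∀ z : V3, (∀ j, j ≠ i → z j = x j) → min (x i) t ≤ z i → z i < max (x i) t →
      R z (mv i 1 z) ∧ R (mv i 1 z) z) :
    Relation.ReflTransGen R x (upd i t x) := by
  by_cases h : x i ≤ t
  · have key : ∀ k : ℕ, (k : ℤ) ≤ t - x i → Relation.ReflTransGen R x (mv i (k : ℤ) x) := by
      intro k
      induction k with
      | zero => intro _; rw [mv_cast i x (show ((0:ℕ):ℤ) = 0 by norm_num), mv_zero]
      | succ n ih =>
        intro hk
        have hk' : ((n:ℕ):ℤ) ≤ t - x i := by push_cast at hk ⊢; omega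
        refine (ih hk').tail ?_
        have hz := hstep (mv i (n : ℤ) x) (fun j hj => mv_ne hj _ x)
          (by rw [mv_same]; omega) (by rw [mv_same]; push_cast at hk; omega)
        have h1 := hz.1
        rw [mv_mv] at h1
        rw [mv_cast i x (show ((n+1:ℕ):ℤ) = (n:ℤ) + 1 by push_cast; ring)]
        exact h1
    have hfin := key (t - x i).toNat (by omega)
    rwa [mv_cast i x (show (((t - x i).toNat : ℕ) : ℤ) = t - x i by omega),
      mv_plain i x t h] at hfin
  · have key : ∀ k : ℕ, (k : ℤ) ≤ x i - t → Relation.ReflTransGen R x (mv i (-(k : ℤ)) x) := by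
      intro k
      induction k with
      | zero => intro _; rw [mv_cast i x (show -((0:ℕ):ℤ) = 0 by norm_num), mv_zero]
      | succ n ih =>
        intro hk
        have hk' : ((n:ℕ):ℤ) ≤ x i - t := by push_cast at hk ⊢; omega
        refine (ih hk').tail ?_
        have hz := hstep (mv i (-(n : ℤ) - 1) x) (fun j hj => mv_ne hj _ x)
          (by rw [mv_same]; push_cast at hk; omega) (by rw [mv_same]; omega)
        have h2 := hz.2
        rw [mv_mv, mv_cast i x (show (-(n:ℤ) - 1) + 1 = -(n:ℤ) by ring)] at h2
        rw [mv_cast i x (show -((n+1:ℕ):ℤ) = -(n:ℤ) - 1 by push_cast; ring)]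
        exact h2
    have hfin := key (x i - t).toNat (by omega)
    rwa [mv_cast i x (show -(((x i - t).toNat : ℕ) : ℤ) = -(x i - t) by omega),
      mv_plain' i x t (by omega)] at hfin

lemma vbox_mem (L M : ℕ) (z : V3) : z ∈ vbox L M ↔
    (-(L:ℤ) ≤ z 0 ∧ z 0 ≤ L) ∧ (-(L:ℤ) ≤ z 1 ∧ z 1 ≤ L) ∧ (-(M:ℤ) ≤ z 2 ∧ z 2 ≤ M) := by
  simp [vbox, abs_le, and_assoc]

lemma adj_outside {L M : ℕ} {ζ : Config} (hζ : AgreesOff (edgeBox L M) dobMu ζ)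
    {u v : V3} (hd : dist1 u v = 1) (hu : u ∉ vbox L M) (hv : v ∉ vbox L M)
    (he : ¬(u 2 = 0 ∧ v 2 = 1)) (he' : ¬(v 2 = 0 ∧ u 2 = 1)) :
    (cfgGraph ζ).Adj u v := by
  refine ⟨hd, ?_⟩
  have hnb : s(u, v) ∉ edgeBox L M := by
    rintro ⟨-, x, hx, hxb⟩
    rcases Sym2.mem_iff.mp hx with rfl | rfl
    · exact hu hxb
    · exact hv hxb
  rw [hζ s(u,v) hnb]
  have hne : ¬ IsEquatorEdge s(u, v) := by
    rintro ⟨x, y, hxy, hx2, hy2, -, -⟩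
    rw [Sym2.eq_iff] at hxy
    rcases hxy with ⟨rfl, rfl⟩ | ⟨rfl, rfl⟩
    · exact he ⟨hx2, hy2⟩
    · exact he' ⟨hx2, hy2⟩
  simp only [dobMu, if_neg hne]

def cplus (M : ℕ) : V3 := fun j => if j = 2 then (M:ℤ)+1 else 0
def cminus (M : ℕ) : V3 := fun j => if j = 2 then -((M:ℤ)+1) else 0
def xzero (L : ℕ) : V3 := fun j => if j = 0 then (L:ℤ)+1 else 0

lemma cplus_two (M : ℕ) : cplus M 2 = (M:ℤ)+1 := if_pos rfl
lemma cplus_zero (M : ℕ) : cplus M 0 = 0 := if_neg (by decide)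
lemma cplus_one (M : ℕ) : cplus M 1 = 0 := if_neg (by decide)
lemma cminus_two (M : ℕ) : cminus M 2 = -((M:ℤ)+1) := if_pos rfl
lemma cminus_zero (M : ℕ) : cminus M 0 = 0 := if_neg (by decide)
lemma cminus_one (M : ℕ) : cminus M 1 = 0 := if_neg (by decide)
lemma xzero_zero (L : ℕ) : xzero L 0 = (L:ℤ)+1 := if_pos rfl
lemma xzero_one (L : ℕ) : xzero L 1 = 0 := if_neg (by decide)
lemma xzero_two (L : ℕ) : xzero L 2 = 0 := if_neg (by decide)

lemma cplus_not_box (L M : ℕ) : cplus M ∉ vbox L M := by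
  rw [vbox_mem]
  intro h
  rw [cplus_two] at h
  omega

lemma cminus_not_box (L M : ℕ) : cminus M ∉ vbox L M := by
  rw [vbox_mem]
  intro h
  rw [cminus_two] at h
  omega

lemma xzero_not_box (L M : ℕ) : xzero L ∉ vbox L M := by
  rw [vbox_mem]
  intro h
  rw [xzero_zero] at h
  omega

lemma mv_xzero_not_box (L M : ℕ) : mv 2 1 (xzero L) ∉ vbox L M := by
  rw [vbox_mem]
  intro h
  rw [mv_ne (show (0:Fin 3) ≠ 2 by decide) 1 (xzero L), xzero_zero] at h
  omega

lemma cplus_upBdry (L M : ℕ) : cplus M ∈ upBdry (vbox L M) := by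
  refine ⟨cplus_not_box L M, by rw [cplus_two]; omega, mv 2 (-1) (cplus M), ?_, ?_⟩
  · rw [vbox_mem]
    rw [mv_same, mv_ne (show (0:Fin 3) ≠ 2 by decide), mv_ne (show (1:Fin 3) ≠ 2 by decide),
      cplus_zero, cplus_one, cplus_two]
    omega
  · exact dist1_mv' 2 (-1) (Or.inr rfl) (cplus M)

lemma cminus_lowBdry (L M : ℕ) : cminus M ∈ lowBdry (vbox L M) := by
  refine ⟨cminus_not_box L M, by rw [cminus_two]; omega, mv 2 1 (cminus M), ?_, ?_⟩
  · rw [vbox_mem]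
    rw [mv_same, mv_ne (show (0:Fin 3) ≠ 2 by decide), mv_ne (show (1:Fin 3) ≠ 2 by decide),
      cminus_zero, cminus_one, cminus_two]
    omega
  · exact dist1_mv' 2 1 (Or.inl rfl) (cminus M)

/-- Routing in the upper outside region to `cplus`. -/
lemma route_plus (L M : ℕ) (R : V3 → V3 → Prop)
    (hR : ∀ z z' : V3, dist1 z z' = 1 → z ∉ vbox L M → z' ∉ vbox L M →
      1 ≤ z 2 → 1 ≤ z' 2 → R z z' ∧ R z' z)
    {u : V3} (hu : u ∉ vbox L M) (hu2 : 1 ≤ u 2) :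
    Relation.ReflTransGen R u (cplus M) := by
  rw [vbox_mem] at hu
  set H : ℤ := max (u 2) ((M:ℤ)+1) with hH
  -- leg 1 : raise coordinate 2 to H
  have leg1 : Relation.ReflTransGen R u (upd 2 H u) := by
    refine rtg_move R 2 u H (fun z hco hmin hmax => ?_)
    have hz0 : z 0 = u 0 := hco 0 (show (0:Fin 3) ≠ 2 by decide)
    have hz1 : z 1 = u 1 := hco 1 (show (1:Fin 3) ≠ 2 by decide)
    have hzb : z ∉ vbox L M := by rw [vbox_mem]; omega
    have hzb' : mv 2 1 z ∉ vbox L M := by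
      have m0 : mv 2 1 z 0 = z 0 := mv_ne (show (0:Fin 3) ≠ 2 by decide) 1 z
      have m1 : mv 2 1 z 1 = z 1 := mv_ne (show (1:Fin 3) ≠ 2 by decide) 1 z
      have m2 : mv 2 1 z 2 = z 2 + 1 := mv_same 2 1 z
      rw [vbox_mem]
      omega
    have m2 : mv 2 1 z 2 = z 2 + 1 := mv_same 2 1 z
    exact hR z (mv 2 1 z) (dist1_mv' 2 1 (Or.inl rfl) z) hzb hzb' (by omega) (by omega)
  have w1_0 : upd 2 H u 0 = u 0 := upd_ne (show (0:Fin 3) ≠ 2 by decide) H u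
  have w1_1 : upd 2 H u 1 = u 1 := upd_ne (show (1:Fin 3) ≠ 2 by decide) H u
  have w1_2 : upd 2 H u 2 = H := upd_same 2 H u
  -- leg 2 : coordinate 1 to 0
  have leg2 : Relation.ReflTransGen R (upd 2 H u) (upd 1 0 (upd 2 H u)) := by
    refine rtg_move R 1 (upd 2 H u) 0 (fun z hco hmin hmax => ?_)
    have hz2 : z 2 = H := by rw [hco 2 (show (2:Fin 3) ≠ 1 by decide), w1_2]
    have hzb : z ∉ vbox L M := by rw [vbox_mem]; omega
    have hzb' : mv 1 1 z ∉ vbox L M := by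
      have m2 : mv 1 1 z 2 = z 2 := mv_ne (show (2:Fin 3) ≠ 1 by decide) 1 z
      rw [vbox_mem]
      omega
    have m2' : mv 1 1 z 2 = z 2 := mv_ne (show (2:Fin 3) ≠ 1 by decide) 1 z
    exact hR z (mv 1 1 z) (dist1_mv' 1 1 (Or.inl rfl) z) hzb hzb' (by omega) (by omega)
  have w2_0 : upd 1 0 (upd 2 H u) 0 = u 0 := by
    rw [upd_ne (show (0:Fin 3) ≠ 1 by decide), w1_0]
  have w2_2 : upd 1 0 (upd 2 H u) 2 = H := by
    rw [upd_ne (show (2:Fin 3) ≠ 1 by decide), w1_2]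
  -- leg 3 : coordinate 0 to 0
  have leg3 : Relation.ReflTransGen R (upd 1 0 (upd 2 H u)) (upd 0 0 (upd 1 0 (upd 2 H u))) := by
    refine rtg_move R 0 (upd 1 0 (upd 2 H u)) 0 (fun z hco hmin hmax => ?_)
    have hz2 : z 2 = H := by rw [hco 2 (show (2:Fin 3) ≠ 0 by decide), w2_2]
    have hzb : z ∉ vbox L M := by rw [vbox_mem]; omega
    have hzb' : mv 0 1 z ∉ vbox L M := by
      have m2 : mv 0 1 z 2 = z 2 := mv_ne (show (2:Fin 3) ≠ 0 by decide) 1 z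
      rw [vbox_mem]
      omega
    have m2' : mv 0 1 z 2 = z 2 := mv_ne (show (2:Fin 3) ≠ 0 by decide) 1 z
    exact hR z (mv 0 1 z) (dist1_mv' 0 1 (Or.inl rfl) z) hzb hzb' (by omega) (by omega)
  have w3_2 : upd 0 0 (upd 1 0 (upd 2 H u)) 2 = H := by
    rw [upd_ne (show (2:Fin 3) ≠ 0 by decide), w2_2]
  -- leg 4 : lower coordinate 2 to M+1
  have leg4 : Relation.ReflTransGen R (upd 0 0 (upd 1 0 (upd 2 H u)))
      (upd 2 ((M:ℤ)+1) (upd 0 0 (upd 1 0 (upd 2 H u)))) := by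
    refine rtg_move R 2 (upd 0 0 (upd 1 0 (upd 2 H u))) ((M:ℤ)+1) (fun z hco hmin hmax => ?_)
    have hz0 : z 0 = 0 := by rw [hco 0 (show (0:Fin 3) ≠ 2 by decide), upd_same]
    have hz1 : z 1 = 0 := by
      rw [hco 1 (show (1:Fin 3) ≠ 2 by decide), upd_ne (show (1:Fin 3) ≠ 0 by decide), upd_same]
    rw [w3_2] at hmin hmax
    have hzb : z ∉ vbox L M := by rw [vbox_mem]; omega
    have hzb' : mv 2 1 z ∉ vbox L M := by
      have m0 : mv 2 1 z 0 = z 0 := mv_ne (show (0:Fin 3) ≠ 2 by decide) 1 z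
      have m1 : mv 2 1 z 1 = z 1 := mv_ne (show (1:Fin 3) ≠ 2 by decide) 1 z
      have m2 : mv 2 1 z 2 = z 2 + 1 := mv_same 2 1 z
      rw [vbox_mem]
      omega
    have m2' : mv 2 1 z 2 = z 2 + 1 := mv_same 2 1 z
    exact hR z (mv 2 1 z) (dist1_mv' 2 1 (Or.inl rfl) z) hzb hzb' (by omega) (by omega)
  have hend : upd 2 ((M:ℤ)+1) (upd 0 0 (upd 1 0 (upd 2 H u))) = cplus M := by
    funext j
    rcases (show j = 0 ∨ j = 1 ∨ j = 2 by revert j; decide) with rfl | rfl | rfl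
    · rw [upd_ne (show (0:Fin 3) ≠ 2 by decide), upd_same, cplus_zero]
    · rw [upd_ne (show (1:Fin 3) ≠ 2 by decide), upd_ne (show (1:Fin 3) ≠ 0 by decide),
        upd_same, cplus_one]
    · rw [upd_same, cplus_two]
  rw [hend] at leg4
  exact ((leg1.trans leg2).trans leg3).trans leg4

/-- Routing in the lower outside region to `cminus`. -/
lemma route_minus (L M : ℕ) (R : V3 → V3 → Prop)
    (hR : ∀ z z' : V3, dist1 z z' = 1 → z ∉ vbox L M → z' ∉ vbox L M →
      z 2 ≤ 0 → z' 2 ≤ 0 → R z z' ∧ R z' z)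
    {u : V3} (hu : u ∉ vbox L M) (hu2 : u 2 ≤ 0) :
    Relation.ReflTransGen R u (cminus M) := by
  rw [vbox_mem] at hu
  set D : ℤ := min (u 2) (-(M:ℤ)-1) with hD
  -- leg 1 : lower coordinate 2 to D
  have leg1 : Relation.ReflTransGen R u (upd 2 D u) := by
    refine rtg_move R 2 u D (fun z hco hmin hmax => ?_)
    have hz0 : z 0 = u 0 := hco 0 (show (0:Fin 3) ≠ 2 by decide)
    have hz1 : z 1 = u 1 := hco 1 (show (1:Fin 3) ≠ 2 by decide)
    have hzb : z ∉ vbox L M := by rw [vbox_mem]; omega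
    have hzb' : mv 2 1 z ∉ vbox L M := by
      have m0 : mv 2 1 z 0 = z 0 := mv_ne (show (0:Fin 3) ≠ 2 by decide) 1 z
      have m1 : mv 2 1 z 1 = z 1 := mv_ne (show (1:Fin 3) ≠ 2 by decide) 1 z
      have m2 : mv 2 1 z 2 = z 2 + 1 := mv_same 2 1 z
      rw [vbox_mem]
      omega
    have m2' : mv 2 1 z 2 = z 2 + 1 := mv_same 2 1 z
    exact hR z (mv 2 1 z) (dist1_mv' 2 1 (Or.inl rfl) z) hzb hzb' (by omega) (by omega)
  have w1_0 : upd 2 D u 0 = u 0 := upd_ne (show (0:Fin 3) ≠ 2 by decide) D u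
  have w1_1 : upd 2 D u 1 = u 1 := upd_ne (show (1:Fin 3) ≠ 2 by decide) D u
  have w1_2 : upd 2 D u 2 = D := upd_same 2 D u
  -- leg 2 : coordinate 1 to 0
  have leg2 : Relation.ReflTransGen R (upd 2 D u) (upd 1 0 (upd 2 D u)) := by
    refine rtg_move R 1 (upd 2 D u) 0 (fun z hco hmin hmax => ?_)
    have hz2 : z 2 = D := by rw [hco 2 (show (2:Fin 3) ≠ 1 by decide), w1_2]
    have hzb : z ∉ vbox L M := by rw [vbox_mem]; omega
    have hzb' : mv 1 1 z ∉ vbox L M := by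
      have m2 : mv 1 1 z 2 = z 2 := mv_ne (show (2:Fin 3) ≠ 1 by decide) 1 z
      rw [vbox_mem]
      omega
    have m2' : mv 1 1 z 2 = z 2 := mv_ne (show (2:Fin 3) ≠ 1 by decide) 1 z
    exact hR z (mv 1 1 z) (dist1_mv' 1 1 (Or.inl rfl) z) hzb hzb' (by omega) (by omega)
  have w2_0 : upd 1 0 (upd 2 D u) 0 = u 0 := by
    rw [upd_ne (show (0:Fin 3) ≠ 1 by decide), w1_0]
  have w2_2 : upd 1 0 (upd 2 D u) 2 = D := by
    rw [upd_ne (show (2:Fin 3) ≠ 1 by decide), w1_2]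
  -- leg 3 : coordinate 0 to 0
  have leg3 : Relation.ReflTransGen R (upd 1 0 (upd 2 D u)) (upd 0 0 (upd 1 0 (upd 2 D u))) := by
    refine rtg_move R 0 (upd 1 0 (upd 2 D u)) 0 (fun z hco hmin hmax => ?_)
    have hz2 : z 2 = D := by rw [hco 2 (show (2:Fin 3) ≠ 0 by decide), w2_2]
    have hzb : z ∉ vbox L M := by rw [vbox_mem]; omega
    have hzb' : mv 0 1 z ∉ vbox L M := by
      have m2 : mv 0 1 z 2 = z 2 := mv_ne (show (2:Fin 3) ≠ 0 by decide) 1 z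
      rw [vbox_mem]
      omega
    have m2' : mv 0 1 z 2 = z 2 := mv_ne (show (2:Fin 3) ≠ 0 by decide) 1 z
    exact hR z (mv 0 1 z) (dist1_mv' 0 1 (Or.inl rfl) z) hzb hzb' (by omega) (by omega)
  have w3_2 : upd 0 0 (upd 1 0 (upd 2 D u)) 2 = D := by
    rw [upd_ne (show (2:Fin 3) ≠ 0 by decide), w2_2]
  -- leg 4 : raise coordinate 2 to -(M+1)
  have leg4 : Relation.ReflTransGen R (upd 0 0 (upd 1 0 (upd 2 D u)))
      (upd 2 (-(M:ℤ)-1) (upd 0 0 (upd 1 0 (upd 2 D u)))) := by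
    refine rtg_move R 2 (upd 0 0 (upd 1 0 (upd 2 D u))) (-(M:ℤ)-1) (fun z hco hmin hmax => ?_)
    have hz0 : z 0 = 0 := by rw [hco 0 (show (0:Fin 3) ≠ 2 by decide), upd_same]
    have hz1 : z 1 = 0 := by
      rw [hco 1 (show (1:Fin 3) ≠ 2 by decide), upd_ne (show (1:Fin 3) ≠ 0 by decide), upd_same]
    rw [w3_2] at hmin hmax
    have hzb : z ∉ vbox L M := by rw [vbox_mem]; omega
    have hzb' : mv 2 1 z ∉ vbox L M := by
      have m0 : mv 2 1 z 0 = z 0 := mv_ne (show (0:Fin 3) ≠ 2 by decide) 1 z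
      have m1 : mv 2 1 z 1 = z 1 := mv_ne (show (1:Fin 3) ≠ 2 by decide) 1 z
      have m2 : mv 2 1 z 2 = z 2 + 1 := mv_same 2 1 z
      rw [vbox_mem]
      omega
    have m2' : mv 2 1 z 2 = z 2 + 1 := mv_same 2 1 z
    exact hR z (mv 2 1 z) (dist1_mv' 2 1 (Or.inl rfl) z) hzb hzb' (by omega) (by omega)
  have hend : upd 2 (-(M:ℤ)-1) (upd 0 0 (upd 1 0 (upd 2 D u))) = cminus M := by
    funext j
    rcases (show j = 0 ∨ j = 1 ∨ j = 2 by revert j; decide) with rfl | rfl | rfl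
    · rw [upd_ne (show (0:Fin 3) ≠ 2 by decide), upd_same, cminus_zero]
    · rw [upd_ne (show (1:Fin 3) ≠ 2 by decide), upd_ne (show (1:Fin 3) ≠ 0 by decide),
        upd_same, cminus_one]
    · rw [upd_same, cminus_two]; ring
  rw [hend] at leg4
  exact ((leg1.trans leg2).trans leg3).trans leg4

end Stmt4

namespace Stmt4

def Tset (M : ℕ) (ζ : Config) : Set V3 := {v | (cfgGraph ζ).Reachable (cplus M) v}

def Oset (M : ℕ) (ζ : Config) : Set V3 :=
  {v | v ∉ Tset M ζ ∧
    Relation.ReflTransGen (fun p q => dist1 p q = 1 ∧ q ∉ Tset M ζ) (cminus M) v}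

def stepE (M : ℕ) (ζ : Config) : EdgeP → EdgeP → Prop := fun e1 e2 =>
  (∃ u v, e2 = s(u, v) ∧ dist1 u v = 1 ∧
    (u ∈ Tset M ζ ∧ v ∈ Oset M ζ ∨ v ∈ Tset M ζ ∧ u ∈ Oset M ζ)) ∧
  OneConn (dualPlq e1) (dualPlq e2)

def e0E (L : ℕ) : EdgeP := s(mv 2 1 (xzero L), xzero L)

lemma add_ez (x : V3) : x + ez = mv 2 1 x := by
  funext j
  by_cases h : j = 2
  · subst h
    show x 2 + ez 2 = _
    rw [mv_same]
    simp [ez]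
  · show x j + ez j = _
    rw [mv_ne h]
    simp [ez, h]

lemma T_strengthen {M : ℕ} {ζ : Config} {u w : V3}
    (hu : (cfgGraph ζ).Reachable (cplus M) u)
    (h : Relation.ReflTransGen (cfgGraph ζ).Adj u w) :
    Relation.ReflTransGen (fun p q => dist1 p q = 1 ∧
      (cfgGraph ζ).Reachable (cplus M) p ∧ (cfgGraph ζ).Reachable (cplus M) q) u w := by
  induction h with
  | refl => exact .refl
  | @tail b c hab hbc ih =>
    have hbT : (cfgGraph ζ).Reachable (cplus M) b :=
      hu.trans ((SimpleGraph.reachable_iff_reflTransGen u b).mpr hab)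
    exact ih.tail ⟨hbc.1, hbT, hbT.trans hbc.reachable⟩

lemma reverse_dir (L M : ℕ) {ζ ω : Config}
    (hζI : ζ ∈ eventI L M) (hζμ : ζ ∈ OmegaMu L M) (hωμ : ω ∈ OmegaMu L M)
    (hcl : ∀ e : EdgeP, IsLatticeEdge e → dualPlq e ∈ interfaceOf (edgeBox L M) ζ →
      ω e = false) :
    ω ∈ eventI L M := by
  intro hex
  obtain ⟨a, ha, b, hb, hab⟩ := hex
  -- basic reachability facts
  have hUplusT : ∀ u : V3, u ∉ vbox L M → 1 ≤ u 2 → u ∈ Tset M ζ := by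
    intro u hu h2
    have hroute := route_plus L M (cfgGraph ζ).Adj
      (fun z z' hd hz hz' h1 h1' =>
        ⟨adj_outside hζμ hd hz hz' (by omega) (by omega),
         adj_outside hζμ (by rw [dist1_comm]; exact hd) hz' hz (by omega) (by omega)⟩)
      hu h2
    exact ((SimpleGraph.reachable_iff_reflTransGen u (cplus M)).mpr hroute).symm
  have hreachMinus : ∀ u : V3, u ∉ vbox L M → u 2 ≤ 0 →
      (cfgGraph ζ).Reachable u (cminus M) := by
    intro u hu h2
    have hroute := route_minus L M (cfgGraph ζ).Adj
      (fun z z' hd hz hz' h1 h1' =>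
        ⟨adj_outside hζμ hd hz hz' (by omega) (by omega),
         adj_outside hζμ (by rw [dist1_comm]; exact hd) hz' hz (by omega) (by omega)⟩)
      hu h2
    exact (SimpleGraph.reachable_iff_reflTransGen u (cminus M)).mpr hroute
  have hUminusNotT : ∀ u : V3, u ∉ vbox L M → u 2 ≤ 0 → u ∉ Tset M ζ := by
    intro u hu h2 huT
    exact hζI ⟨cplus M, cplus_upBdry L M, cminus M, cminus_lowBdry L M,
      (show (cfgGraph ζ).Reachable (cplus M) u from huT).trans (hreachMinus u hu h2)⟩
  have hUminusO : ∀ u : V3, u ∉ vbox L M → u 2 ≤ 0 → u ∈ Oset M ζ := by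
    intro u hu h2
    refine ⟨hUminusNotT u hu h2, ?_⟩
    have hroute := route_minus L M
      (fun p q => dist1 p q = 1 ∧ p ∉ Tset M ζ ∧ q ∉ Tset M ζ)
      (fun z z' hd hz hz' l l' =>
        ⟨⟨hd, hUminusNotT z hz l, hUminusNotT z' hz' l'⟩,
         ⟨by rw [dist1_comm]; exact hd, hUminusNotT z' hz' l', hUminusNotT z hz l⟩⟩)
      hu h2
    have hsym : Symmetric (fun p q : V3 => dist1 p q = 1 ∧ p ∉ Tset M ζ ∧ q ∉ Tset M ζ) :=
      fun p q ⟨hd, hp, hq⟩ => ⟨by rw [dist1_comm]; exact hd, hq, hp⟩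
    have hrev := Std.Symm.symm (self := @Relation.ReflTransGen.stdSymm _ _ ⟨hsym⟩) _ _ hroute
    exact Relation.ReflTransGen.mono (fun p q hpq => ⟨hpq.1, hpq.2.2⟩) _ _ hrev
  have hcminusO : cminus M ∈ Oset M ζ :=
    hUminusO _ (cminus_not_box L M) (by rw [cminus_two]; omega)
  have hOclosure : ∀ p q : V3, dist1 p q = 1 → q ∈ Oset M ζ → p ∉ Oset M ζ →
      p ∈ Tset M ζ := by
    intro p q hd hq hp
    by_contra hpT
    exact hp ⟨hpT, hq.2.tail ⟨by rw [dist1_comm]; exact hd, hpT⟩⟩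
  have hOmem : ∀ v : V3,
      Relation.ReflTransGen (fun p q => dist1 p q = 1 ∧ q ∉ Tset M ζ) (cminus M) v →
      v ∈ Oset M ζ ∨ v = cminus M := by
    intro v h
    induction h with
    | refl => exact Or.inr rfl
    | @tail b' c' hab' hbc' ih => exact Or.inl ⟨hbc'.2, hab'.tail hbc'⟩
  have hOchain : ∀ v ∈ Oset M ζ, Relation.ReflTransGen
      (fun p q => dist1 p q = 1 ∧ p ∈ Oset M ζ ∧ q ∈ Oset M ζ) (cminus M) v := by
    intro v hv
    have key : ∀ w : V3,
        Relation.ReflTransGen (fun p q => dist1 p q = 1 ∧ q ∉ Tset M ζ) (cminus M) w →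
        Relation.ReflTransGen
          (fun p q => dist1 p q = 1 ∧ p ∈ Oset M ζ ∧ q ∈ Oset M ζ) (cminus M) w := by
      intro w h
      induction h with
      | refl => exact .refl
      | @tail b' c' hab' hbc' ih =>
        have hcO : c' ∈ Oset M ζ := ⟨hbc'.2, hab'.tail hbc'⟩
        have hbO : b' ∈ Oset M ζ := by
          rcases hOmem b' hab' with h' | rfl
          · exact h'
          · exact hcminusO
        exact ih.tail ⟨hbc'.1, hbO, hcO⟩
    exact key v hv.2
  -- the reference crossing edge
  have hppT : mv 2 1 (xzero L) ∈ Tset M ζ :=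
    hUplusT _ (mv_xzero_not_box L M) (by rw [mv_same, xzero_two]; omega)
  have hqqO : xzero L ∈ Oset M ζ :=
    hUminusO _ (xzero_not_box L M) (by have := xzero_two L; omega)
  have hdpq : dist1 (mv 2 1 (xzero L)) (xzero L) = 1 := by
    rw [dist1_comm]; exact dist1_mv' 2 1 (Or.inl rfl) (xzero L)
  -- crossing of the ω path
  have haT : a ∈ Tset M ζ := hUplusT a ha.1 (by have := ha.2.1; omega)
  have hbO : b ∈ Oset M ζ := hUminusO b hb.1 hb.2.1
  have hcross : ∃ u v, (cfgGraph ω).Adj u v ∧ u ∈ Tset M ζ ∧ v ∈ Oset M ζ := by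
    have hrtg := (SimpleGraph.reachable_iff_reflTransGen a b).mp hab
    have key : ∀ p q : V3, Relation.ReflTransGen (cfgGraph ω).Adj p q → q ∈ Oset M ζ →
        p ∉ Oset M ζ → ∃ u v, (cfgGraph ω).Adj u v ∧ u ∈ Tset M ζ ∧ v ∈ Oset M ζ := by
      intro p q h
      induction h with
      | refl => exact fun h1 h2 => absurd h1 h2
      | @tail b' c' hab' hbc' ih =>
        intro hc hp
        by_cases hb' : b' ∈ Oset M ζ
        · exact ih hb' hp
        · exact ⟨b', c', hbc', hOclosure b' c' hbc'.1 hc hb', hc⟩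
    exact key a b hrtg hbO (fun h => h.1 haT)
  obtain ⟨u, v, huv, huT, hvO⟩ := hcross
  -- chains for the main lemma
  have chainT : Relation.ReflTransGen
      (fun p q => dist1 p q = 1 ∧ p ∉ Oset M ζ ∧ q ∉ Oset M ζ) u (mv 2 1 (xzero L)) := by
    have hreach : Relation.ReflTransGen (cfgGraph ζ).Adj u (mv 2 1 (xzero L)) :=
      (SimpleGraph.reachable_iff_reflTransGen _ _).mp
        ((show (cfgGraph ζ).Reachable (cplus M) u from huT).symm.trans
          (show (cfgGraph ζ).Reachable (cplus M) (mv 2 1 (xzero L)) from hppT))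
    exact Relation.ReflTransGen.mono
      (fun p q hpq => ⟨hpq.1, fun hO' => hO'.1 hpq.2.1, fun hO' => hO'.1 hpq.2.2⟩) _ _ (T_strengthen (show (cfgGraph ζ).Reachable (cplus M) u from huT) hreach)
  have hOsym : Symmetric
      (fun p q : V3 => dist1 p q = 1 ∧ p ∈ Oset M ζ ∧ q ∈ Oset M ζ) :=
    fun p q ⟨hd, hp, hq⟩ => ⟨by rw [dist1_comm]; exact hd, hq, hp⟩
  have chainO : Relation.ReflTransGen
      (fun p q => dist1 p q = 1 ∧ p ∈ Oset M ζ ∧ q ∈ Oset M ζ) v (xzero L) :=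
    (Std.Symm.symm (self := @Relation.ReflTransGen.stdSymm _ _ ⟨hOsym⟩) _ _ (hOchain v hvO)).trans (hOchain _ hqqO)
  -- the context and main lemma
  have hswap : ∀ a' b' : EdgeP,
      (∃ u' v', a' = s(u', v') ∧ dist1 u' v' = 1 ∧
        (u' ∈ Tset M ζ ∧ v' ∈ Oset M ζ ∨ v' ∈ Tset M ζ ∧ u' ∈ Oset M ζ)) →
      (∃ u' v', b' = s(u', v') ∧ dist1 u' v' = 1 ∧
        (u' ∈ Tset M ζ ∧ v' ∈ Oset M ζ ∨ v' ∈ Tset M ζ ∧ u' ∈ Oset M ζ)) →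
      OneConn (dualPlq a') (dualPlq b') →
      (Relation.ReflTransGen (stepE M ζ) (e0E L) a' ↔
       Relation.ReflTransGen (stepE M ζ) (e0E L) b') := by
    intro a' b' ha' hb' hoc
    constructor
    · intro h; exact h.tail ⟨hb', hoc⟩
    · intro h; exact h.tail ⟨ha', oneConn_symm hoc⟩
  have hEuv : Relation.ReflTransGen (stepE M ζ) (e0E L) s(u, v) :=
    CtxT.main ⟨Tset M ζ, Oset M ζ, Relation.ReflTransGen (stepE M ζ) (e0E L),
        fun x hx hxO => hxO.1 hx, hOclosure, hswap⟩
      chainT chainO hdpq (fun h => h.1 hppT) hqqO Relation.ReflTransGen.refl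
      huv.1 (fun h => h.1 huT) hvO
  -- every crossing edge is dual to an open plaquette of ζ
  have hopen : ∀ e : EdgeP,
      (∃ u' v', e = s(u', v') ∧ dist1 u' v' = 1 ∧
        (u' ∈ Tset M ζ ∧ v' ∈ Oset M ζ ∨ v' ∈ Tset M ζ ∧ u' ∈ Oset M ζ)) →
      dualPlq e ∈ openPlqs ζ := by
    rintro e ⟨u', v', rfl, hd, hor⟩
    refine ⟨s(u', v'), ⟨u', v', rfl, hd⟩, ?_, rfl⟩
    have hζtrue : ζ s(u', v') = false ∨ ζ s(u', v') = true := by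
      cases ζ s(u', v') <;> simp
    rcases hζtrue with h' | h'
    · exact h'
    · exfalso
      rcases hor with ⟨hu', hv'⟩ | ⟨hv', hu'⟩
      · exact hv'.1 ((show (cfgGraph ζ).Reachable (cplus M) u' from hu').trans
          (SimpleGraph.Adj.reachable ⟨hd, h'⟩))
      · exact hu'.1 ((show (cfgGraph ζ).Reachable (cplus M) v' from hv').trans
          (SimpleGraph.Adj.reachable ⟨by rw [dist1_comm]; exact hd,
            by rw [Sym2.eq_swap]; exact h'⟩))
  -- e₀ is a lattice edge
  have he0lat : IsLatticeEdge (e0E L) := ⟨mv 2 1 (xzero L), xzero L, rfl, hdpq⟩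
  -- dualPlq e₀ lies in the base of the interface
  have hbase : dualPlq (e0E L) ∈ baseI (edgeBox L M) := by
    constructor
    · refine ⟨xzero L, xzero_two L, ?_⟩
      rw [add_ez]
      show dualPlq (s(mv 2 1 (xzero L), xzero L)) = _
      rw [Sym2.eq_swap]
    · rintro ⟨e, heB, heq⟩
      have he' : e0E L = e := dualPlq_inj he0lat heB.1 heq
      obtain ⟨-, x, hx, hxb⟩ := heB
      rw [← he'] at hx
      rcases Sym2.mem_iff.mp hx with rfl | rfl
      · exact mv_xzero_not_box L M hxb
      · exact xzero_not_box L M hxb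
  -- from the edge chain to interface membership
  have hmem : dualPlq s(u, v) ∈ interfaceOf (edgeBox L M) ζ := by
    refine ⟨hopen _ ⟨u, v, rfl, huv.1, Or.inl ⟨huT, hvO⟩⟩, dualPlq (e0E L), hbase, ?_⟩
    have map : ∀ f : EdgeP, Relation.ReflTransGen (stepE M ζ) (e0E L) f →
        Relation.ReflTransGen (fun P Q => Q ∈ openPlqs ζ ∧ OneConn P Q)
          (dualPlq (e0E L)) (dualPlq f) := by
      intro f hf
      induction hf with
      | refl => exact .refl
      | @tail e1 e2 h12 hstep ih => exact ih.tail ⟨hopen e2 hstep.1, hstep.2⟩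
    exact map _ hEuv
  -- contradiction
  have hfalse := hcl s(u, v) ⟨u, v, rfl, huv.1⟩ hmem
  rw [huv.2] at hfalse
  exact Bool.noConfusion hfalse

lemma forward_dir (L M : ℕ) {ω : Config} (hI : ω ∈ eventI L M) (hμ : ω ∈ OmegaMu L M) :
    ∃ δ ∈ Dlm L M, ∀ e : EdgeP, IsLatticeEdge e → dualPlq e ∈ δ → ω e = false := by
  refine ⟨interfaceOf (edgeBox L M) ω, ⟨ω, hI, hμ, rfl⟩, ?_⟩
  intro e he hmem
  obtain ⟨⟨e', hlat', hval', heq'⟩, -⟩ := hmem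
  rw [dualPlq_inj he hlat' heq']
  exact hval'

end Stmt4

open Stmt4


/-- `I_{L,M} ∩ Ω^μ_{L,M}` consists exactly of the configurations all of
whose edges dual to the plaquettes of some interface `δ ∈ D_{L,M}` are closed. -/
theorem statement4 (L M : ℕ) (hL : 1 ≤ L) (hM : 1 ≤ M) :
    eventI L M ∩ OmegaMu L M =
      {ω | ω ∈ OmegaMu L M ∧ ∃ δ ∈ Dlm L M,
        ∀ e : EdgeP, IsLatticeEdge e → dualPlq e ∈ δ → ω e = false} := by
  ext ω
  simp only [Set.mem_inter_iff, Set.mem_setOf_eq]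
  constructor
  · rintro ⟨hI, hμ⟩
    exact ⟨hμ, forward_dir L M hI hμ⟩
  · rintro ⟨hμ, δ, ⟨ζ, hζI, hζμ, rfl⟩, hcl⟩
    exact ⟨reverse_dir L M hζI hζμ hμ hcl, hμ⟩

end
end
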